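/- arXiv:1205.5247 — 3 statements merged into one kernel-verified Lean document; each statement's English description precedes it below -/
import Mathlib

section
/- Let M be a matroid on a finite linearly ordered set E, and let p, q be nonnegative integers. Then ∂^{p+q} t / ∂x^p ∂y^q (M; x, y) = p! q! Σ_A x^{ι_M(A)} y^{ε_M(A)}, where the sum is over all A ⊆ E with corank r(M) − r_M(A) = p and nullity |A| − r_M(A) = q. -/
open Set

/-- `e` is the smallest element of `C`. -/
def SmallestIn {α : Type*} [LinearOrder α] (e : α) (C : Set α) : Prop :=
  e ∈ C ∧ ∀ f ∈ C, e ≤ f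

/-- `C` is a circuit of `M`: a minimal dependent set. -/
def IsCircuit {α : Type*} (M : Matroid α) (C : Set α) : Prop :=
  ¬ M.Indep C ∧ ∀ x ∈ C, M.Indep (C \ {x})

/-- A cocircuit is a circuit of the dual matroid. -/
def IsCocircuit {α : Type*} (M : Matroid α) (C : Set α) : Prop :=
  IsCircuit M✶ C

/-- `P_M(A)`: elements outside `A` that are smallest in some cocircuit avoiding `A`. -/
def Pset {α : Type*} [LinearOrder α] (M : Matroid α) (A : Set α) : Set α :=
  {e | e ∉ A ∧ ∃ C, IsCocircuit M C ∧ C ⊆ Aᶜ ∧ SmallestIn e C}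

/-- `Q_M(A)`: elements of `A` that are smallest in some circuit contained in `A`. -/
def Qset {α : Type*} [LinearOrder α] (M : Matroid α) (A : Set α) : Set α :=
  {e | e ∈ A ∧ ∃ C, IsCircuit M C ∧ C ⊆ A ∧ SmallestIn e C}

/-- Externally active elements of `A`. -/
def ExtSet {α : Type*} [LinearOrder α] (M : Matroid α) (A : Set α) : Set α :=
  {e | e ∉ A ∧ ∃ C, IsCircuit M C ∧ C ⊆ A ∪ {e} ∧ SmallestIn e C}

/-- Internally active elements of `A`. -/
def IntSet {α : Type*} [LinearOrder α] (M : Matroid α) (A : Set α) : Set α :=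
  {e | e ∈ A ∧ ∃ C, IsCocircuit M C ∧ C ⊆ Aᶜ ∪ {e} ∧ SmallestIn e C}

/-- The rank of a set: the largest cardinality of an independent subset. -/
noncomputable def rk {α : Type*} (M : Matroid α) (A : Set α) : ℕ :=
  sSup (Set.ncard '' {I | I ⊆ A ∧ M.Indep I})

/-- Matroid perspective (strong-map / quotient condition, form (MP3)). -/
def Perspective {α : Type*} (M M' : Matroid α) : Prop :=
  ∀ C D : Set α, IsCircuit M C → IsCocircuit M' D → (C ∩ D).ncard ≠ 1

/-- Rank codrop of a subset in a matroid perspective. -/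
noncomputable def rcd {α : Type*} (M M' : Matroid α) (A : Set α) : ℕ :=
  ((rk M Set.univ : ℤ) - rk M' Set.univ - ((rk M A : ℤ) - rk M' A)).toNat

open MvPolynomial in
/-- The Tutte polynomial of a matroid, in variables `X 0 = x` and `X 1 = y`. -/
noncomputable def tutte {α : Type*} [Fintype α] (M : Matroid α) : MvPolynomial (Fin 2) ℤ :=
  ∑ A ∈ (Finset.univ : Finset α).powerset,
    (X 0 - 1) ^ (rk M Set.univ - rk M (A : Set α)) *
      (X 1 - 1) ^ (A.card - rk M (A : Set α))

section CircuitBasics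

variable {α : Type*} {M : Matroid α} {C D X : Set α} {e f a : α}

lemma IsCircuit.not_indep (h : IsCircuit M C) : ¬ M.Indep C := h.1

lemma ground_eq_univ (hE : M.E = Set.univ) (X : Set α) : X ⊆ M.E := hE ▸ Set.subset_univ X

/-- Every dependent set (in a finite matroid) contains a circuit. -/
lemma exists_circuit_subset [Fintype α] (hE : M.E = Set.univ) (hD : ¬ M.Indep X) :
    ∃ C ⊆ X, IsCircuit M C := by
  classical
  obtain ⟨n, hn⟩ : ∃ n, X.ncard = n := ⟨_, rfl⟩
  induction n using Nat.strong_induction_on generalizing X with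
  | _ n ih =>
    by_cases hc : ∀ x ∈ X, M.Indep (X \ {x})
    · exact ⟨X, subset_rfl, hD, hc⟩
    push_neg at hc
    obtain ⟨x, hxX, hx⟩ := hc
    obtain ⟨C, hCX, hC⟩ := ih (X \ {x}).ncard (by
      subst hn
      exact Set.ncard_lt_ncard (Set.ssubset_iff_subset_ne.2 ⟨Set.diff_subset, fun h => ((h.symm ▸ hxX) : x ∈ X \ {x}).2 rfl⟩) X.toFinite) hx rfl
    exact ⟨C, hCX.trans Set.diff_subset, hC⟩

/-- If `e` is in the closure of `X` but not in `X`, there is a circuit through `e`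
inside `insert e X`. -/
lemma exists_circuit_of_mem_closure [Fintype α] (hE : M.E = Set.univ)
    (he : e ∈ M.closure X) (heX : e ∉ X) :
    ∃ C, IsCircuit M C ∧ e ∈ C ∧ C ⊆ insert e X := by
  classical
  obtain ⟨I, hI⟩ := M.exists_isBasis X (ground_eq_univ hE X)
  have heI : e ∈ M.closure I := by rwa [hI.closure_eq_closure]
  have heI' : e ∉ I := fun h => heX (hI.subset h)
  have hdep : ¬ M.Indep (insert e I) := by
    rw [hI.indep.mem_closure_iff] at heI
    rcases heI with h | h
    · exact h.not_indep
    · exact absurd h heI'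
  obtain ⟨C, hCI, hC⟩ := exists_circuit_subset hE hdep
  refine ⟨C, hC, ?_, hCI.trans (insert_subset_insert (hI.subset))⟩
  by_contra heC
  exact hC.not_indep (hI.indep.subset (fun x hx => ((hCI hx).resolve_left (by rintro rfl; exact heC hx))))

lemma IsCircuit.mem_closure_diff (hE : M.E = Set.univ) (hC : IsCircuit M C) (he : e ∈ C) :
    e ∈ M.closure (C \ {e}) := by
  have hind : M.Indep (C \ {e}) := hC.2 e he
  have : ¬ M.Indep (insert e (C \ {e})) := by
    rw [Set.insert_diff_singleton, Set.insert_eq_of_mem he]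
    exact hC.not_indep
  rw [hind.mem_closure_iff]
  left
  exact ⟨this, ground_eq_univ hE _⟩

lemma IsCocircuit.not_coindep (h : IsCocircuit M D) : ¬ M✶.Indep D := h.1

/-- A circuit and a cocircuit cannot meet in exactly one element. -/
lemma circuit_inter_cocircuit_ne_singleton [Fintype α] (hE : M.E = Set.univ)
    (hC : IsCircuit M C) (hD : IsCocircuit M D) (f : α) : C ∩ D ≠ {f} := by
  classical
  intro hCD
  have hfC : f ∈ C := by have : f ∈ C ∩ D := hCD ▸ rfl; exact this.1
  have hfD : f ∈ D := by have : f ∈ C ∩ D := hCD ▸ rfl; exact this.2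
  -- `D \ {f}` is coindependent, so its complement is spanning
  have hco : M.Coindep (D \ {f}) := Matroid.coindep_def.2 (hD.2 f hfD)
  have hsp : M.Spanning (M.E \ (D \ {f})) := hco.compl_spanning
  -- `C \ {f}` is independent and lies in this spanning set
  have hCf : M.Indep (C \ {f}) := hC.2 f hfC
  have hCfsub : C \ {f} ⊆ M.E \ (D \ {f}) := by
    intro x hx
    refine ⟨ground_eq_univ hE C hx.1, ?_⟩
    · intro hxD
      exact hx.2 (by have : x ∈ C ∩ D := ⟨hx.1, hxD.1⟩; rw [hCD] at this; exact this)
  obtain ⟨J, hJ⟩ := hCf.subset_isBasis_of_subset hCfsub (ground_eq_univ hE _)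
  have hJbase : M.IsBase J := by
    refine hJ.1.indep.isBase_of_ground_subset_closure ?_
    rw [hJ.1.closure_eq_closure]
    rw [Matroid.spanning_iff_closure_eq (ground_eq_univ hE _)] at hsp
    exact hsp.symm.subset
  have hfJ : f ∉ J := by
    intro hfJ
    have : f ∈ M.closure (J \ {f}) := by
      refine M.closure_subset_closure ?_ (hC.mem_closure_diff hE hfC)
      exact Set.subset_diff_singleton hJ.2 (by simp)
    exact hJbase.indep.notMem_closure_diff_of_mem hfJ this
  have hdisj : Disjoint D J := by
    rw [Set.disjoint_left]
    intro x hxD hxJ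
    have hxE : x ∈ M.E \ (D \ {f}) := hJ.1.subset hxJ
    have : x = f := by
      by_contra hne
      exact hxE.2 ⟨hxD, hne⟩
    exact hfJ (this ▸ hxJ)
  exact hD.not_coindep (Matroid.dual_indep_iff_exists (ground_eq_univ hE D) |>.2 ⟨J, hJbase, hdisj⟩)

end CircuitBasics
section Clash

variable {α : Type*} [Fintype α] {M : Matroid α} {B C D : Set α} {a f : α}

lemma smallestIn_exists {C : Set α} [LinearOrder α] (hC : C.Nonempty) : ∃ e, SmallestIn e C := by
  classical
  obtain ⟨e, heC, he⟩ := Set.exists_min_image C id C.toFinite hC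
  exact ⟨e, heC, he⟩

lemma IsCircuit.nonempty (hC : IsCircuit M C) : C.Nonempty := by
  rcases C.eq_empty_or_nonempty with rfl | h
  · exact absurd M.empty_indep hC.not_indep
  · exact h

/-- Key clash lemma: a circuit in `B ∪ {a}` and a cocircuit in `Bᶜ ∪ {f}` meeting in `f`
must also share `a`. -/
lemma clash (hE : M.E = Set.univ) (hC : IsCircuit M C) (hCs : C ⊆ insert a B) (ha : a ∉ B)
    (hD : IsCocircuit M D) (hDs : D ⊆ insert f Bᶜ) (hf : f ∈ B)
    (hfC : f ∈ C) (hfD : f ∈ D) : a ∈ C ∧ a ∈ D := by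
  have hsub : C ∩ D ⊆ {a, f} := by
    rintro x ⟨hxC, hxD⟩
    rcases hCs hxC with rfl | hxB
    · exact Or.inl rfl
    rcases hDs hxD with rfl | hxB'
    · exact Or.inr rfl
    · exact absurd hxB hxB'
  have hne := circuit_inter_cocircuit_ne_singleton hE hC hD f
  by_contra hcon
  apply hne
  apply Set.Subset.antisymm
  · intro x hx
    rcases hsub hx with rfl | rfl
    · exact absurd ⟨hx.1, hx.2⟩ hcon
    · rfl
  · rintro x rfl
    exact ⟨hfC, hfD⟩

end Clash

section Greedy

variable {α : Type*} [Fintype α] [LinearOrder α] {M : Matroid α} {A B : Set α} {a e f : α}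

/-- Greedy independent subset of `A`, scanning elements downwards. -/
def Iset (M : Matroid α) [LinearOrder α] (A : Set α) : Set α :=
  {a | a ∈ A ∧ a ∉ M.closure (A ∩ Set.Ioi a)}

/-- Greedy extension outside `A`, scanning elements upwards. -/
def Jset (M : Matroid α) [LinearOrder α] (A : Set α) : Set α :=
  {a | a ∉ A ∧ a ∉ M.closure (A ∪ (Aᶜ ∩ Set.Iio a))}

def gBase (M : Matroid α) [LinearOrder α] (A : Set α) : Set α := Iset M A ∪ Jset M A

lemma Iset_subset : Iset M A ⊆ A := fun _ h => h.1

lemma Jset_subset_compl : Jset M A ⊆ Aᶜ := fun _ h => h.1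

lemma mem_closure_Iset (hE : M.E = Set.univ) :
    ∀ a ∈ A, a ∈ M.closure (Iset M A ∩ Set.Ici a) := by
  have wf : WellFounded ((· > ·) : α → α → Prop) := Finite.to_wellFoundedGT.wf
  intro a
  induction a using WellFounded.induction wf with
  | _ a ih =>
    intro haA
    by_cases hI : a ∈ Iset M A
    · exact M.subset_closure _ (ground_eq_univ hE _) ⟨hI, le_refl a⟩
    have ha : a ∈ M.closure (A ∩ Set.Ioi a) := by
      simp only [Iset, Set.mem_setOf_eq, not_and, not_not] at hI
      exact hI haA
    have hsub : A ∩ Set.Ioi a ⊆ M.closure (Iset M A ∩ Set.Ici a) := by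
      rintro b ⟨hbA, hba⟩
      refine (M.closure_subset_closure ?_) (ih b hba hbA)
      exact Set.inter_subset_inter_right _ (Set.Ici_subset_Ici.2 (le_of_lt hba))
    exact M.closure_subset_closure_of_subset_closure hsub ha

lemma subset_closure_Iset (hE : M.E = Set.univ) : A ⊆ M.closure (Iset M A) := fun a ha =>
  M.closure_subset_closure Set.inter_subset_left (mem_closure_Iset hE a ha)

lemma Iset_indep (hE : M.E = Set.univ) : M.Indep (Iset M A) := by
  by_contra hdep
  obtain ⟨C, hCs, hC⟩ := exists_circuit_subset hE hdep
  obtain ⟨e, heC, hmin⟩ := smallestIn_exists hC.nonempty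
  have : e ∈ M.closure (A ∩ Set.Ioi e) := by
    refine M.closure_subset_closure ?_ (hC.mem_closure_diff hE heC)
    rintro x ⟨hxC, hxe⟩
    have hxI := hCs hxC
    exact ⟨hxI.1, lt_of_le_of_ne (hmin x hxC) (Ne.symm (by simpa using hxe))⟩
  exact (hCs heC).2 this

lemma mem_closure_Jset (hE : M.E = Set.univ) :
    ∀ a, a ∉ A → a ∈ M.closure (A ∪ (Jset M A ∩ Set.Iic a)) := by
  have wf : WellFounded ((· < ·) : α → α → Prop) := Finite.to_wellFoundedLT.wf
  intro a
  induction a using WellFounded.induction wf with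
  | _ a ih =>
    intro haA
    by_cases hJ : a ∈ Jset M A
    · exact M.subset_closure _ (ground_eq_univ hE _) (Or.inr ⟨hJ, le_refl a⟩)
    have ha : a ∈ M.closure (A ∪ (Aᶜ ∩ Set.Iio a)) := by
      simp only [Jset, Set.mem_setOf_eq, not_and, not_not] at hJ
      exact hJ haA
    have hsub : A ∪ (Aᶜ ∩ Set.Iio a) ⊆ M.closure (A ∪ (Jset M A ∩ Set.Iic a)) := by
      rintro b (hbA | ⟨hbA, hba⟩)
      · exact M.subset_closure _ (ground_eq_univ hE _) (Or.inl hbA)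
      refine (M.closure_subset_closure ?_) (ih b hba hbA)
      exact Set.union_subset_union_right _
        (Set.inter_subset_inter_right _ (Set.Iic_subset_Iic.2 (le_of_lt hba)))
    exact M.closure_subset_closure_of_subset_closure hsub ha

lemma gBase_spanning (hE : M.E = Set.univ) : M.Spanning (gBase M A) := by
  rw [Matroid.spanning_iff_closure_eq (ground_eq_univ hE _), hE]
  refine Set.eq_univ_of_univ_subset ?_
  intro a _
  by_cases haA : a ∈ A
  · exact M.closure_subset_closure Set.subset_union_left (subset_closure_Iset hE haA)
  have := mem_closure_Jset hE a haA
  refine M.closure_subset_closure_of_subset_closure ?_ this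
  rintro b (hbA | ⟨hbJ, _⟩)
  · exact M.closure_subset_closure Set.subset_union_left (subset_closure_Iset hE hbA)
  · exact M.subset_closure _ (ground_eq_univ hE _) (Or.inr hbJ)

lemma gBase_indep (hE : M.E = Set.univ) : M.Indep (gBase M A) := by
  by_contra hdep
  obtain ⟨C, hCs, hC⟩ := exists_circuit_subset hE hdep
  by_cases hCJ : (C ∩ Jset M A).Nonempty
  · obtain ⟨e, heC, hmax⟩ := Set.exists_max_image _ id (C ∩ Jset M A).toFinite hCJ
    have : e ∈ M.closure (A ∪ (Aᶜ ∩ Set.Iio e)) := by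
      refine M.closure_subset_closure ?_ (hC.mem_closure_diff hE heC.1)
      rintro x ⟨hxC, hxe⟩
      rcases hCs hxC with hxI | hxJ
      · exact Or.inl hxI.1
      · refine Or.inr ⟨hxJ.1, ?_⟩
        exact lt_of_le_of_ne (hmax x ⟨hxC, hxJ⟩) (by simpa using hxe)
    exact heC.2.2 this
  · rw [Set.not_nonempty_iff_eq_empty] at hCJ
    have : C ⊆ Iset M A := by
      intro x hx
      rcases hCs hx with h | h
      · exact h
      · exact absurd (Set.eq_empty_iff_forall_notMem.1 hCJ x) (by simp [hx, h])
    exact hC.not_indep ((Iset_indep hE).subset this)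

lemma gBase_base (hE : M.E = Set.univ) : M.IsBase (gBase M A) :=
  (gBase_indep hE).isBase_of_spanning (gBase_spanning hE)

end Greedy
section Duality

variable {α : Type*} [LinearOrder α] {M : Matroid α} {A : Set α}

lemma intSet_eq_extSet_dual (M : Matroid α) (A : Set α) : IntSet M A = ExtSet M✶ Aᶜ := by
  ext e
  simp only [IntSet, ExtSet, IsCocircuit, Set.mem_setOf_eq, Set.mem_compl_iff, not_not]

lemma extSet_eq_intSet_dual (M : Matroid α) (A : Set α) : ExtSet M A = IntSet M✶ Aᶜ := by
  ext e
  simp only [IntSet, ExtSet, IsCocircuit, Set.mem_setOf_eq, Set.mem_compl_iff, not_not,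
    Matroid.dual_dual, compl_compl]

end Duality

section Activity

variable {α : Type*} [Fintype α] [LinearOrder α] {M : Matroid α} {A B : Set α} {a e f : α}

lemma diff_gBase_subset_extSet (hE : M.E = Set.univ) :
    A \ gBase M A ⊆ ExtSet M (gBase M A) := by
  rintro e ⟨heA, heB⟩
  have heI : e ∉ Iset M A := fun h => heB (Or.inl h)
  have he1 : e ∈ M.closure (A ∩ Set.Ioi e) := by
    simp only [Iset, Set.mem_setOf_eq, not_and, not_not] at heI
    exact heI heA
  have he2 : e ∈ M.closure (Iset M A ∩ Set.Ioi e) := by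
    refine M.closure_subset_closure_of_subset_closure ?_ he1
    rintro b ⟨hbA, hbe⟩
    refine M.closure_subset_closure ?_ (mem_closure_Iset hE b hbA)
    exact Set.inter_subset_inter_right _ (fun x hx => lt_of_lt_of_le hbe hx)
  obtain ⟨C, hC, heC, hCs⟩ := exists_circuit_of_mem_closure hE he2
    (fun h => absurd h.2 (lt_irrefl e))
  refine ⟨heB, C, hC, ?_, heC, ?_⟩
  · refine hCs.trans ?_
    rw [Set.union_singleton]
    exact Set.insert_subset_insert (fun x hx => Or.inl hx.1)
  · intro f hf
    rcases hCs hf with rfl | hx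
    · exact le_refl _
    · exact le_of_lt hx.2

lemma mem_dual_closure_of (hE : M.E = Set.univ) (hB : M.IsBase B) (he : e ∈ B)
    (h : Bᶜ ∩ Set.Iio e ⊆ M.closure (B \ {e})) :
    e ∈ M✶.closure (Bᶜ ∩ Set.Ioi e) := by
  have hXind : M✶.Indep (Bᶜ ∩ Set.Ioi e) := by
    rw [Matroid.dual_indep_iff_exists (ground_eq_univ (by simpa using hE) _)]
    exact ⟨B, hB, Set.disjoint_left.2 (fun x hx hxB => hx.1 hxB)⟩
  rw [hXind.mem_closure_iff]
  left
  constructor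
  · intro hind
    rw [Matroid.dual_indep_iff_exists (ground_eq_univ (by simpa using hE) _)] at hind
    obtain ⟨B', hB', hdisj⟩ := hind
    have hB'sub : B' ⊆ M.closure (B \ {e}) := by
      intro x hxB'
      have hx : x ∉ insert e (Bᶜ ∩ Set.Ioi e) := fun h => (Set.disjoint_left.1 hdisj h) hxB'
      by_cases hxB : x ∈ B
      · refine M.subset_closure _ (ground_eq_univ hE _) ⟨hxB, ?_⟩
        simp only [Set.mem_singleton_iff]
        intro rfl_eq
        exact hx (by simp [rfl_eq])
      · refine h ⟨hxB, ?_⟩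
        have hne : x ≠ e := fun hh => hx (by simp [hh])
        have : ¬ (e < x) := fun hh => hx (Set.mem_insert_iff.2 (Or.inr ⟨hxB, hh⟩))
        exact lt_of_le_of_ne (not_lt.1 this) hne
    have : e ∈ M.closure (B \ {e}) := by
      have h1 : M.E ⊆ M.closure B' := hB'.spanning.closure_eq.symm.subset
      have h2 : M.closure B' ⊆ M.closure (B \ {e}) :=
        M.closure_subset_closure_of_subset_closure hB'sub
      exact h2 (h1 (by rw [hE]; trivial))
    exact hB.indep.notMem_closure_diff_of_mem he this
  · exact ground_eq_univ (M := M✶) (by simpa using hE) _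

lemma gBase_diff_subset_intSet (hE : M.E = Set.univ) :
    gBase M A \ A ⊆ IntSet M (gBase M A) := by
  rintro e ⟨heB, heA⟩
  have heJ : e ∈ Jset M A := heB.resolve_left (fun h => heA h.1)
  set B := gBase M A with hBdef
  have heI : e ∉ Iset M A := fun h => heA h.1
  have hIsub : Iset M A ⊆ B \ {e} := fun x hx =>
    ⟨Or.inl hx, fun hxe => heI ((Set.mem_singleton_iff.1 hxe) ▸ hx)⟩
  have hAcl : A ⊆ M.closure (B \ {e}) := fun x hx =>
    M.closure_subset_closure hIsub (subset_closure_Iset hE hx)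
  have hkey : Bᶜ ∩ Set.Iio e ⊆ M.closure (B \ {e}) := by
    rintro f ⟨hfB, hfe⟩
    by_cases hfA : f ∈ A
    · exact hAcl hfA
    have hfJ : f ∉ Jset M A := fun h => hfB (Or.inr h)
    have := mem_closure_Jset hE f hfA
    refine M.closure_subset_closure_of_subset_closure ?_ this
    rintro b (hbA | ⟨hbJ, hbf⟩)
    · exact hAcl hbA
    · refine M.subset_closure _ (ground_eq_univ hE _) ⟨Or.inr hbJ, ?_⟩
      simp only [Set.mem_singleton_iff]
      rintro rfl
      exact absurd (lt_of_le_of_lt hbf hfe) (lt_irrefl _)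
  have hdual := mem_dual_closure_of hE (gBase_base hE) heB hkey
  obtain ⟨C, hC, heC, hCs⟩ := exists_circuit_of_mem_closure (M := M✶) (by simpa using hE) hdual
    (fun h => absurd h.2 (lt_irrefl e))
  refine ⟨heB, C, hC, ?_, heC, ?_⟩
  · refine hCs.trans ?_
    rw [Set.union_singleton]
    exact Set.insert_subset_insert (fun x hx => hx.1)
  · intro f hf
    rcases hCs hf with rfl | hx
    · exact le_refl _
    · exact le_of_lt hx.2

/-- The interval condition: `A` lies in the activity interval of the base `B`. -/
def InInterval (M : Matroid α) (B A : Set α) : Prop :=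
  M.IsBase B ∧ B \ A ⊆ IntSet M B ∧ A \ B ⊆ ExtSet M B

lemma gBase_inInterval (hE : M.E = Set.univ) : InInterval M (gBase M A) A :=
  ⟨gBase_base hE, gBase_diff_subset_intSet hE, diff_gBase_subset_extSet hE⟩

end Activity
section Uniqueness

variable {α : Type*} [Fintype α] [LinearOrder α] {M : Matroid α} {A B : Set α} {a e f : α}

lemma InInterval.base (h : InInterval M B A) : M.IsBase B := h.1

/-- (α): an element of `A \ B` is spanned by the larger elements of `A ∩ B`. -/
lemma InInterval.mem_closure_inter (hE : M.E = Set.univ) (h : InInterval M B A)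
    (ha : a ∈ A) (haB : a ∉ B) : a ∈ M.closure ((A ∩ B) ∩ Set.Ioi a) := by
  obtain ⟨-, C, hC, hCs, haC, hmin⟩ := h.2.2 ⟨ha, haB⟩
  refine M.closure_subset_closure ?_ (hC.mem_closure_diff hE haC)
  rintro f ⟨hfC, hfa⟩
  have hfa' : f ≠ a := by simpa using hfa
  have hfB : f ∈ B := by
    rcases hCs hfC with hfB | hfa2
    · exact hfB
    · exact absurd (Set.mem_singleton_iff.1 hfa2) hfa'
  have haf : a < f := lt_of_le_of_ne (hmin f hfC) (Ne.symm hfa')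
  refine ⟨⟨?_, hfB⟩, haf⟩
  by_contra hfA
  obtain ⟨-, D, hD, hDs, hfD, hminD⟩ := h.2.1 ⟨hfB, hfA⟩
  have hCs' : C ⊆ insert a B := by rwa [← Set.union_singleton]
  have hDs' : D ⊆ insert f Bᶜ := by rwa [← Set.union_singleton]
  obtain ⟨-, haD⟩ := clash hE hC hCs' haB hD hDs' hfB hfC hfD
  exact absurd (hminD a haD) (not_le.2 haf)

lemma InInterval.iset_eq (hE : M.E = Set.univ) (h : InInterval M B A) :
    Iset M A = A ∩ B := by
  ext a
  constructor
  · rintro ⟨haA, hacl⟩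
    refine ⟨haA, ?_⟩
    by_contra haB
    exact hacl <| M.closure_subset_closure (Set.inter_subset_inter_left _ Set.inter_subset_left)
      (h.mem_closure_inter hE haA haB)
  · rintro ⟨haA, haB⟩
    refine ⟨haA, fun hacl => ?_⟩
    have hsub : A ∩ Set.Ioi a ⊆ M.closure ((A ∩ B) ∩ Set.Ioi a) := by
      rintro b ⟨hbA, hba⟩
      by_cases hbB : b ∈ B
      · exact M.subset_closure _ (ground_eq_univ hE _) ⟨⟨hbA, hbB⟩, hba⟩
      · refine M.closure_subset_closure ?_ (h.mem_closure_inter hE hbA hbB)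
        exact Set.inter_subset_inter_right _ (fun x hx => lt_trans hba hx)
    have : a ∈ M.closure (B \ {a}) := by
      refine M.closure_subset_closure ?_
        (M.closure_subset_closure_of_subset_closure hsub hacl)
      rintro x ⟨⟨-, hxB⟩, hxa⟩
      exact ⟨hxB, by simp [ne_of_gt hxa]⟩
    exact h.base.indep.notMem_closure_diff_of_mem haB this

lemma InInterval.jset_eq (hE : M.E = Set.univ) (h : InInterval M B A) :
    Jset M A = B \ A := by
  ext a
  constructor
  · rintro ⟨haA, hacl⟩
    refine ⟨?_, haA⟩
    by_contra haB
    apply hacl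
    have hacl2 : a ∈ M.closure B := by
      rw [h.base.spanning.closure_eq, hE]; trivial
    obtain ⟨C, hC, haC, hCs⟩ := exists_circuit_of_mem_closure hE hacl2 haB
    refine M.closure_subset_closure ?_ (hC.mem_closure_diff hE haC)
    rintro f ⟨hfC, hfa⟩
    have hfa' : f ≠ a := by simpa using hfa
    have hfB : f ∈ B := (hCs hfC).resolve_left (fun hh => hfa' hh)
    by_cases hfA : f ∈ A
    · exact Or.inl hfA
    obtain ⟨-, D, hD, hDs, hfD, hminD⟩ := h.2.1 ⟨hfB, hfA⟩
    have hCs' : C ⊆ insert a B := hCs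
    have hDs' : D ⊆ insert f Bᶜ := by rwa [← Set.union_singleton]
    obtain ⟨-, haD⟩ := clash hE hC hCs' haB hD hDs' hfB hfC hfD
    exact Or.inr ⟨hfA, lt_of_le_of_ne (hminD a haD) hfa'⟩
  · rintro ⟨haB, haA⟩
    refine ⟨haA, fun hacl => ?_⟩
    obtain ⟨-, D, hD, hDs, haD, hminD⟩ := h.2.1 ⟨haB, haA⟩
    have haX : a ∉ A ∪ (Aᶜ ∩ Set.Iio a) := by
      rintro (hh | ⟨-, hh⟩)
      · exact haA hh
      · exact lt_irrefl a hh
    obtain ⟨C, hC, haC, hCs⟩ := exists_circuit_of_mem_closure hE hacl haX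
    apply circuit_inter_cocircuit_ne_singleton hE hC hD a
    apply Set.Subset.antisymm
    · rintro x ⟨hxC, hxD⟩
      by_contra hxa
      have hxa' : x ≠ a := by simpa using hxa
      have hxB : x ∉ B := fun hxB => hxa' <| by
        rcases hDs hxD with h1 | h1
        · exact absurd hxB h1
        · exact Set.mem_singleton_iff.1 h1
      have hax : a < x := lt_of_le_of_ne (hminD x hxD) (Ne.symm hxa')
      have hxA : x ∈ A := by
        rcases hCs hxC with h1 | h1
        · exact absurd (Set.mem_singleton_iff.1 h1) hxa'
        · rcases h1 with h1 | ⟨-, h1⟩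
          · exact h1
          · exact absurd (lt_trans h1 hax) (lt_irrefl _)
      obtain ⟨-, C₂, hC₂, hC₂s, hxC₂, hmin₂⟩ := h.2.2 ⟨hxA, hxB⟩
      apply circuit_inter_cocircuit_ne_singleton hE hC₂ hD x
      apply Set.Subset.antisymm
      · rintro y ⟨hyC₂, hyD⟩
        by_cases hyB : y ∈ B
        · exfalso
          have hya : y = a := by
            rcases hDs hyD with h1 | h1
            · exact absurd hyB h1
            · exact Set.mem_singleton_iff.1 h1
          subst hya
          exact absurd (hmin₂ y hyC₂) (not_le.2 hax)
        · rcases hC₂s hyC₂ with h1 | h1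
          · exact absurd h1 hyB
          · exact h1
      · rintro y rfl
        exact ⟨hxC₂, hxD⟩
    · rintro x rfl
      exact ⟨haC, haD⟩

lemma InInterval.gBase_eq (hE : M.E = Set.univ) (h : InInterval M B A) :
    gBase M A = B := by
  rw [gBase, h.iset_eq hE, h.jset_eq hE, Set.inter_comm, Set.inter_union_diff]

end Uniqueness
section RankFacts

variable {α : Type*} [Fintype α] [LinearOrder α] {M : Matroid α} {A B I X : Set α} {a e f : α}

omit [LinearOrder α] in
lemma rk_eq_ncard_of_basis (hI : M.IsBasis I X) : rk M X = I.ncard := by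
  refine IsGreatest.csSup_eq ⟨⟨I, ⟨hI.subset, hI.indep⟩, rfl⟩, ?_⟩
  rintro n ⟨J, ⟨hJX, hJind⟩, rfl⟩
  obtain ⟨I', hI', hJI'⟩ := hJind.subset_isBasis_of_subset hJX hI.subset_ground
  have h1 : J.ncard ≤ I'.ncard := Set.ncard_le_ncard hJI' I'.toFinite
  have h2 : I'.ncard = I.ncard := by
    rw [Set.ncard_def, hI'.encard_eq_encard hI, ← Set.ncard_def]
  omega

omit [LinearOrder α] in
lemma rk_univ_eq (hE : M.E = Set.univ) (hB : M.IsBase B) : rk M Set.univ = B.ncard :=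
  rk_eq_ncard_of_basis (hE ▸ hB.isBasis_ground)

lemma InInterval.basis_inter (hE : M.E = Set.univ) (h : InInterval M B A) :
    M.IsBasis (A ∩ B) A := by
  refine Matroid.isBasis_iff_indep_subset_closure.2
    ⟨h.base.indep.subset Set.inter_subset_right, Set.inter_subset_left, ?_⟩
  intro a haA
  by_cases haB : a ∈ B
  · exact M.subset_closure _ (ground_eq_univ hE _) ⟨haA, haB⟩
  · exact M.closure_subset_closure Set.inter_subset_left (h.mem_closure_inter hE haA haB)

lemma InInterval.rk_eq (hE : M.E = Set.univ) (h : InInterval M B A) :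
    rk M A = (A ∩ B).ncard := rk_eq_ncard_of_basis (h.basis_inter hE)

lemma InInterval.extSet_eq (hE : M.E = Set.univ) (h : InInterval M B A) :
    ExtSet M A = ExtSet M B \ (A \ B) := by
  ext e
  constructor
  · rintro ⟨heA, C, hC, hCs, heC, hmin⟩
    have hecl : e ∈ M.closure ((A ∩ B) ∩ Set.Ioi e) := by
      refine M.closure_subset_closure_of_subset_closure ?_
        (M.closure_subset_closure (?_ : C \ {e} ⊆ A ∩ Set.Ioi e)
          (hC.mem_closure_diff hE heC))
      · rintro b ⟨hbA, hbe⟩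
        by_cases hbB : b ∈ B
        · exact M.subset_closure _ (ground_eq_univ hE _) ⟨⟨hbA, hbB⟩, hbe⟩
        · refine M.closure_subset_closure ?_ (h.mem_closure_inter hE hbA hbB)
          exact Set.inter_subset_inter_right _ (fun x hx => lt_trans hbe hx)
      · rintro f ⟨hfC, hfe⟩
        have hfe' : f ≠ e := by simpa using hfe
        have hfA : f ∈ A := by
          rcases hCs hfC with h1 | h1
          · exact h1
          · exact absurd (Set.mem_singleton_iff.1 h1) hfe'
        exact ⟨hfA, lt_of_le_of_ne (hmin f hfC) (Ne.symm hfe')⟩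
    have heB : e ∉ B := by
      intro heB
      have : e ∈ M.closure (B \ {e}) := by
        refine M.closure_subset_closure ?_ hecl
        rintro x ⟨⟨-, hxB⟩, hxe⟩
        exact ⟨hxB, by simp [ne_of_gt hxe]⟩
      exact h.base.indep.notMem_closure_diff_of_mem heB this
    obtain ⟨C', hC', heC', hC's⟩ := exists_circuit_of_mem_closure hE hecl
      (fun hh => absurd hh.2 (lt_irrefl e))
    refine ⟨⟨heB, C', hC', ?_, heC', ?_⟩, fun hh => heA hh.1⟩
    · refine hC's.trans ?_
      rw [Set.union_singleton]
      exact Set.insert_subset_insert (fun x hx => hx.1.2)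
    · intro f hf
      rcases hC's hf with rfl | hx
      · exact le_refl _
      · exact le_of_lt hx.2
  · rintro ⟨⟨heB, C, hC, hCs, heC, hmin⟩, heAB⟩
    have heA : e ∉ A := fun hh => heAB ⟨hh, heB⟩
    refine ⟨heA, C, hC, ?_, heC, hmin⟩
    rintro f hfC
    by_cases hfe : f = e
    · exact Or.inr (by simp [hfe])
    have hfB : f ∈ B := by
      rcases hCs hfC with h1 | h1
      · exact h1
      · exact absurd (Set.mem_singleton_iff.1 h1) hfe
    refine Or.inl ?_
    by_contra hfA
    obtain ⟨-, D, hD, hDs, hfD, hminD⟩ := h.2.1 ⟨hfB, hfA⟩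
    have hCs' : C ⊆ insert e B := by rwa [← Set.union_singleton]
    have hDs' : D ⊆ insert f Bᶜ := by rwa [← Set.union_singleton]
    obtain ⟨-, heD⟩ := clash hE hC hCs' heB hD hDs' hfB hfC hfD
    have h1 : f ≤ e := hminD e heD
    have h2 : e ≤ f := hmin f hfC
    exact hfe (le_antisymm h1 h2)

lemma InInterval.dual (hE : M.E = Set.univ) (h : InInterval M B A) :
    InInterval M✶ Bᶜ Aᶜ := by
  refine ⟨?_, ?_, ?_⟩
  · have := h.base.compl_isBase_dual
    rwa [hE, ← Set.compl_eq_univ_diff] at this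
  · rw [show Bᶜ \ Aᶜ = A \ B by rw [Set.diff_compl]; exact Set.inter_comm _ _,
      ← extSet_eq_intSet_dual]
    exact h.2.2
  · rw [show Aᶜ \ Bᶜ = B \ A by rw [Set.diff_compl]; exact Set.inter_comm _ _,
      ← intSet_eq_extSet_dual]
    exact h.2.1

lemma InInterval.intSet_eq (hE : M.E = Set.univ) (h : InInterval M B A) :
    IntSet M A = IntSet M B \ (B \ A) := by
  have hd := (h.dual hE).extSet_eq (by simpa using hE)
  rw [← intSet_eq_extSet_dual, ← intSet_eq_extSet_dual,
    show Aᶜ \ Bᶜ = B \ A by rw [Set.diff_compl]; exact Set.inter_comm _ _] at hd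
  exact hd

end RankFacts
section PolyLemmas
open MvPolynomial

lemma pd_iter_smul (j : Fin 2) (n : ℕ) (c : ℤ) (f : MvPolynomial (Fin 2) ℤ) :
    (⇑(pderiv j))^[n] (c • f) = c • (⇑(pderiv j))^[n] f := by
  induction n generalizing f with
  | zero => simp
  | succ n ih =>
    rw [Function.iterate_succ_apply, Function.iterate_succ_apply, Derivation.map_smul, ih]

lemma pd_iter_sum {β : Type*} (j : Fin 2) (n : ℕ) (s : Finset β)
    (g : β → MvPolynomial (Fin 2) ℤ) :
    (⇑(pderiv j))^[n] (∑ b ∈ s, g b) = ∑ b ∈ s, (⇑(pderiv j))^[n] (g b) := by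
  induction n with
  | zero => simp
  | succ n ih =>
    simp only [Function.iterate_succ_apply', ih, map_sum]

lemma pderiv1_monomial (a b : ℕ) :
    pderiv (1 : Fin 2) ((X 0) ^ a * (X 1) ^ b : MvPolynomial (Fin 2) ℤ) =
      (b : ℤ) • ((X 0) ^ a * (X 1) ^ (b - 1)) := by
  have h0 : pderiv (1 : Fin 2) (X 0 : MvPolynomial (Fin 2) ℤ) = 0 :=
    pderiv_X_of_ne (by decide)
  rw [pderiv_mul, pderiv_pow, pderiv_pow, h0, pderiv_X_self, zsmul_eq_mul]
  push_cast
  ring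

lemma pderiv0_monomial (a b : ℕ) :
    pderiv (0 : Fin 2) ((X 0) ^ a * (X 1) ^ b : MvPolynomial (Fin 2) ℤ) =
      (a : ℤ) • ((X 0) ^ (a - 1) * (X 1) ^ b) := by
  have h0 : pderiv (0 : Fin 2) (X 1 : MvPolynomial (Fin 2) ℤ) = 0 :=
    pderiv_X_of_ne (by decide)
  rw [pderiv_mul, pderiv_pow, pderiv_pow, h0, pderiv_X_self, zsmul_eq_mul]
  push_cast
  ring

lemma pderiv1_iter (a b q : ℕ) :
    (⇑(pderiv (1 : Fin 2)))^[q] ((X 0) ^ a * (X 1) ^ b : MvPolynomial (Fin 2) ℤ) =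
      (b.descFactorial q : ℤ) • ((X 0) ^ a * (X 1) ^ (b - q)) := by
  induction q with
  | zero => simp
  | succ q ih =>
    rw [Function.iterate_succ_apply', ih, Derivation.map_smul, pderiv1_monomial, smul_smul,
      Nat.descFactorial_succ, Nat.sub_sub]
    congr 1
    push_cast
    ring

lemma pderiv0_iter (a b p : ℕ) :
    (⇑(pderiv (0 : Fin 2)))^[p] ((X 0) ^ a * (X 1) ^ b : MvPolynomial (Fin 2) ℤ) =
      (a.descFactorial p : ℤ) • ((X 0) ^ (a - p) * (X 1) ^ b) := by
  induction p with
  | zero => simp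
  | succ p ih =>
    rw [Function.iterate_succ_apply', ih, Derivation.map_smul, pderiv0_monomial, smul_smul,
      Nat.descFactorial_succ, Nat.sub_sub]
    congr 1
    push_cast
    ring

lemma sum_powerset_pow_card {α : Type*} [DecidableEq α] (F : Finset α)
    (z : MvPolynomial (Fin 2) ℤ) :
    ∑ S ∈ F.powerset, z ^ S.card = (z + 1) ^ F.card := by
  rw [Finset.sum_powerset, add_pow]
  refine Finset.sum_congr rfl (fun k hk => ?_)
  calc ∑ t ∈ Finset.powersetCard k F, z ^ t.card
      = ∑ _t ∈ Finset.powersetCard k F, z ^ k :=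
        Finset.sum_congr rfl (fun t ht => by rw [(Finset.mem_powersetCard.1 ht).2])
    _ = z ^ k * 1 ^ (F.card - k) * (F.card.choose k : MvPolynomial (Fin 2) ℤ) := by
        rw [Finset.sum_const, Finset.card_powersetCard, one_pow, nsmul_eq_mul]
        ring

end PolyLemmas
section Partition

variable {α : Type*} [Fintype α] [LinearOrder α] {M : Matroid α} {A B S T : Finset α}

/-- The bases of `M`, as a finset of finsets. -/
noncomputable def basesF (M : Matroid α) : Finset (Finset α) :=
  @Finset.filter _ (fun B => M.IsBase ↑B) (Classical.decPred _) Finset.univ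

lemma mem_basesF : B ∈ basesF M ↔ M.IsBase ↑B := by
  simp [basesF]

/-- Internally active elements, as a finset. -/
noncomputable def intF (M : Matroid α) (B : Finset α) : Finset α :=
  (IntSet M ↑B).toFinite.toFinset

/-- Externally active elements, as a finset. -/
noncomputable def extF (M : Matroid α) (B : Finset α) : Finset α :=
  (ExtSet M ↑B).toFinite.toFinset

/-- The canonical base associated to a subset. -/
noncomputable def gbF (M : Matroid α) (A : Finset α) : Finset α :=
  (gBase M ↑A).toFinite.toFinset

@[simp] lemma coe_intF : (intF M B : Set α) = IntSet M ↑B := Set.Finite.coe_toFinset _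
@[simp] lemma coe_extF : (extF M B : Set α) = ExtSet M ↑B := Set.Finite.coe_toFinset _
@[simp] lemma coe_gbF : (gbF M A : Set α) = gBase M ↑A := Set.Finite.coe_toFinset _

lemma intSet_subset_self (M : Matroid α) (X : Set α) : IntSet M X ⊆ X := fun _ h => h.1

lemma extSet_subset_compl (M : Matroid α) (X : Set α) : ExtSet M X ⊆ Xᶜ := fun _ h => h.1

lemma coe_interval (B S T : Finset α) :
    (((B \ S) ∪ T : Finset α) : Set α) = ((B : Set α) \ S) ∪ T := by
  simp

/-- The interval condition at the finset level. -/
lemma inInterval_of_finsets (hB : M.IsBase ↑B) (hS : (S : Set α) ⊆ IntSet M ↑B)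
    (hT : (T : Set α) ⊆ ExtSet M ↑B) : InInterval M ↑B ↑((B \ S) ∪ T) := by
  rw [coe_interval]
  refine ⟨hB, ?_, ?_⟩
  · rintro x ⟨hxB, hxA⟩
    refine hS ?_
    by_contra hxS
    exact hxA (Or.inl ⟨hxB, hxS⟩)
  · rintro x ⟨hxA, hxB⟩
    rcases hxA with ⟨hxB', -⟩ | hxT
    · exact absurd hxB' hxB
    · exact hT hxT

lemma recover_S (hS : S ⊆ B) (hT : ∀ t ∈ T, t ∉ B) : B \ ((B \ S) ∪ T) = S := by
  ext x
  simp only [Finset.mem_sdiff, Finset.mem_union]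
  have h1 : x ∈ S → x ∈ B := fun h => hS h
  have h2 : x ∈ T → x ∉ B := hT x
  tauto

lemma recover_T (hT : ∀ t ∈ T, t ∉ B) : ((B \ S) ∪ T) \ B = T := by
  ext x
  simp only [Finset.mem_sdiff, Finset.mem_union]
  constructor
  · rintro ⟨hx | hx, hxB⟩
    · exact absurd hx.1 hxB
    · exact hx
  · intro hxT
    exact ⟨Or.inr hxT, hT x hxT⟩

lemma finset_S_subset (hS : (S : Set α) ⊆ IntSet M ↑B) : S ⊆ B :=
  fun x hx => (intSet_subset_self M ↑B (hS hx) : x ∈ (B : Set α))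

lemma finset_T_disj (hT : (T : Set α) ⊆ ExtSet M ↑B) : ∀ t ∈ T, t ∉ B :=
  fun t ht htB => (extSet_subset_compl M ↑B (hT ht)) htB

lemma gbF_interval (hE : M.E = Set.univ) (hB : M.IsBase ↑B) (hS : (S : Set α) ⊆ IntSet M ↑B)
    (hT : (T : Set α) ⊆ ExtSet M ↑B) : gbF M ((B \ S) ∪ T) = B := by
  apply Finset.coe_injective
  rw [coe_gbF]
  exact (inInterval_of_finsets hB hS hT).gBase_eq hE

lemma gbF_mem (hE : M.E = Set.univ) (A : Finset α) : gbF M A ∈ basesF M := by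
  rw [mem_basesF, coe_gbF]
  exact gBase_base hE

lemma gbF_S_mem (hE : M.E = Set.univ) (A : Finset α) :
    ((gbF M A \ A : Finset α) : Set α) ⊆ IntSet M ↑(gbF M A) := by
  rw [Finset.coe_sdiff, coe_gbF]
  exact gBase_diff_subset_intSet hE

lemma gbF_T_mem (hE : M.E = Set.univ) (A : Finset α) :
    ((A \ gbF M A : Finset α) : Set α) ⊆ ExtSet M ↑(gbF M A) := by
  rw [Finset.coe_sdiff, coe_gbF]
  exact diff_gBase_subset_extSet hE

lemma recover_A (A : Finset α) : (gbF M A \ (gbF M A \ A)) ∪ (A \ gbF M A) = A := by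
  ext x
  simp only [Finset.mem_union, Finset.mem_sdiff]
  tauto

/-- The partition of all subsets into base intervals. -/
lemma sum_partition (hE : M.E = Set.univ) {β : Type*} [AddCommMonoid β] (f : Finset α → β) :
    ∑ A ∈ (Finset.univ : Finset α).powerset, f A =
      ∑ B ∈ basesF M, ∑ S ∈ (intF M B).powerset, ∑ T ∈ (extF M B).powerset,
        f ((B \ S) ∪ T) := by
  classical
  have h1 : ∀ B ∈ basesF M, ∑ S ∈ (intF M B).powerset, ∑ T ∈ (extF M B).powerset,
      f ((B \ S) ∪ T) = ∑ p ∈ (intF M B).powerset ×ˢ (extF M B).powerset,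
        f ((B \ p.1) ∪ p.2) := fun B _ => by rw [Finset.sum_product]
  rw [Finset.sum_congr rfl h1,
    Finset.sum_sigma' (basesF M) (fun B => (intF M B).powerset ×ˢ (extF M B).powerset)
      (fun B p => f ((B \ p.1) ∪ p.2))]
  refine Finset.sum_nbij'
    (fun A => (⟨gbF M A, (gbF M A \ A, A \ gbF M A)⟩ : Σ _ : Finset α, Finset α × Finset α))
    (fun x => (x.1 \ x.2.1) ∪ x.2.2) ?_ ?_ ?_ ?_ ?_
  · intro A _
    refine Finset.mem_sigma.2 ⟨gbF_mem hE A, Finset.mem_product.2 ⟨?_, ?_⟩⟩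
    · exact Finset.mem_powerset.2 (by
        have := gbF_S_mem hE A
        rw [← coe_intF] at this
        exact Finset.coe_subset.1 this)
    · exact Finset.mem_powerset.2 (by
        have := gbF_T_mem hE A
        rw [← coe_extF] at this
        exact Finset.coe_subset.1 this)
  · intro x _
    exact Finset.mem_powerset.2 (Finset.subset_univ _)
  · intro A _
    exact recover_A A
  · rintro ⟨B, S, T⟩ hx
    obtain ⟨hB, hST⟩ := Finset.mem_sigma.1 hx
    obtain ⟨hS, hT⟩ := Finset.mem_product.1 hST
    rw [mem_basesF] at hB
    have hS' : (S : Set α) ⊆ IntSet M ↑B := by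
      rw [← coe_intF]; exact Finset.coe_subset.2 (Finset.mem_powerset.1 hS)
    have hT' : (T : Set α) ⊆ ExtSet M ↑B := by
      rw [← coe_extF]; exact Finset.coe_subset.2 (Finset.mem_powerset.1 hT)
    have hgb : gbF M ((B \ S) ∪ T) = B := gbF_interval hE hB hS' hT'
    have hrecS : B \ ((B \ S) ∪ T) = S := recover_S (finset_S_subset hS') (finset_T_disj hT')
    have hrecT : ((B \ S) ∪ T) \ B = T := recover_T (finset_T_disj hT')
    show (⟨gbF M ((B \ S) ∪ T), (gbF M ((B \ S) ∪ T) \ ((B \ S) ∪ T),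
      ((B \ S) ∪ T) \ gbF M ((B \ S) ∪ T))⟩ : Σ _ : Finset α, Finset α × Finset α) = ⟨B, (S, T)⟩
    rw [hgb, hrecS, hrecT]
  · intro A _
    rw [recover_A]

end Partition
section IntervalArith

variable {α : Type*} [Fintype α] [LinearOrder α] {M : Matroid α} {A B S T : Finset α}

lemma interval_inter_eq (hS : S ⊆ B) (hT : ∀ t ∈ T, t ∉ B) :
    ((B \ S) ∪ T) ∩ B = B \ S := by
  ext x
  simp only [Finset.mem_inter, Finset.mem_union, Finset.mem_sdiff]
  have h2 : x ∈ T → x ∉ B := hT x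
  tauto

lemma interval_rk (hE : M.E = Set.univ) (hB : M.IsBase ↑B) (hS' : (S : Set α) ⊆ IntSet M ↑B)
    (hT' : (T : Set α) ⊆ ExtSet M ↑B) :
    rk M ↑((B \ S) ∪ T) = B.card - S.card := by
  have hIv := inInterval_of_finsets hB hS' hT'
  have := hIv.rk_eq hE
  rw [← Finset.coe_inter, interval_inter_eq (finset_S_subset hS') (finset_T_disj hT')] at this
  rw [this, Set.ncard_coe_finset, Finset.card_sdiff_of_subset (finset_S_subset hS')]

lemma interval_corank (hE : M.E = Set.univ) (hB : M.IsBase ↑B) (hS' : (S : Set α) ⊆ IntSet M ↑B)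
    (hT' : (T : Set α) ⊆ ExtSet M ↑B) :
    rk M Set.univ - rk M ↑((B \ S) ∪ T) = S.card := by
  have h1 : rk M Set.univ = B.card := by
    rw [rk_univ_eq hE hB, Set.ncard_coe_finset]
  have h2 := interval_rk hE hB hS' hT'
  have h3 : S.card ≤ B.card := Finset.card_le_card (finset_S_subset hS')
  omega

lemma interval_nullity (hE : M.E = Set.univ) (hB : M.IsBase ↑B) (hS' : (S : Set α) ⊆ IntSet M ↑B)
    (hT' : (T : Set α) ⊆ ExtSet M ↑B) :
    ((B \ S) ∪ T).card - rk M ↑((B \ S) ∪ T) = T.card := by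
  have h2 := interval_rk hE hB hS' hT'
  have hdisj : Disjoint (B \ S) T := by
    rw [Finset.disjoint_left]
    intro x hx hxT
    exact finset_T_disj hT' x hxT (Finset.mem_sdiff.1 hx).1
  have h4 : ((B \ S) ∪ T).card = (B.card - S.card) + T.card := by
    rw [Finset.card_union_of_disjoint hdisj, Finset.card_sdiff_of_subset (finset_S_subset hS')]
  omega

lemma interval_intCard (hE : M.E = Set.univ) (hB : M.IsBase ↑B) (hS' : (S : Set α) ⊆ IntSet M ↑B)
    (hT' : (T : Set α) ⊆ ExtSet M ↑B) :
    (IntSet M ↑((B \ S) ∪ T)).ncard = (intF M B).card - S.card := by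
  have hIv := inInterval_of_finsets hB hS' hT'
  have h1 := hIv.intSet_eq hE
  have h2 : (B : Set α) \ ↑((B \ S) ∪ T) = ↑S := by
    rw [← Finset.coe_sdiff, recover_S (finset_S_subset hS') (finset_T_disj hT')]
  rw [h2] at h1
  rw [h1, Set.ncard_diff hS' (Set.toFinite _)]
  congr 1
  · rw [← coe_intF, Set.ncard_coe_finset]
  · rw [Set.ncard_coe_finset]

lemma interval_extCard (hE : M.E = Set.univ) (hB : M.IsBase ↑B) (hS' : (S : Set α) ⊆ IntSet M ↑B)
    (hT' : (T : Set α) ⊆ ExtSet M ↑B) :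
    (ExtSet M ↑((B \ S) ∪ T)).ncard = (extF M B).card - T.card := by
  have hIv := inInterval_of_finsets hB hS' hT'
  have h1 := hIv.extSet_eq hE
  have h2 : (((B \ S) ∪ T : Finset α) : Set α) \ ↑B = ↑T := by
    rw [← Finset.coe_sdiff, recover_T (finset_T_disj hT')]
  rw [h2] at h1
  rw [h1, Set.ncard_diff hT' (Set.toFinite _)]
  congr 1
  · rw [← coe_extF, Set.ncard_coe_finset]
  · rw [Set.ncard_coe_finset]

lemma interval_S_le (hS' : (S : Set α) ⊆ IntSet M (B : Set α)) : S.card ≤ (intF M B).card := by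
  rw [← Set.ncard_coe_finset S, ← Set.ncard_coe_finset (intF M B), coe_intF]
  exact Set.ncard_le_ncard hS' (Set.toFinite _)

lemma interval_T_le (hT' : (T : Set α) ⊆ ExtSet M (B : Set α)) : T.card ≤ (extF M B).card := by
  rw [← Set.ncard_coe_finset T, ← Set.ncard_coe_finset (extF M B), coe_extF]
  exact Set.ncard_le_ncard hT' (Set.toFinite _)

end IntervalArith

section Crapo
open MvPolynomial

variable {α : Type*} [Fintype α] [LinearOrder α] {M : Matroid α}

lemma crapo (hE : M.E = Set.univ) :
    tutte M = ∑ B ∈ basesF M, (X 0) ^ (intF M B).card * (X 1) ^ (extF M B).card := by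
  rw [tutte, sum_partition hE]
  refine Finset.sum_congr rfl fun B hBmem => ?_
  rw [mem_basesF] at hBmem
  have hstep : ∀ S ∈ (intF M B).powerset, ∀ T ∈ (extF M B).powerset,
      (X 0 - 1) ^ (rk M Set.univ - rk M ↑((B \ S) ∪ T)) *
        (X 1 - 1) ^ (((B \ S) ∪ T).card - rk M ↑((B \ S) ∪ T)) =
      ((X 0 - 1) ^ S.card) * ((X 1 - 1) ^ T.card : MvPolynomial (Fin 2) ℤ) := by
    intro S hS T hT
    have hS' : (S : Set α) ⊆ IntSet M ↑B := by
      rw [← coe_intF]; exact Finset.coe_subset.2 (Finset.mem_powerset.1 hS)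
    have hT' : (T : Set α) ⊆ ExtSet M ↑B := by
      rw [← coe_extF]; exact Finset.coe_subset.2 (Finset.mem_powerset.1 hT)
    rw [interval_corank hE hBmem hS' hT', interval_nullity hE hBmem hS' hT']
  calc ∑ S ∈ (intF M B).powerset, ∑ T ∈ (extF M B).powerset,
        (X 0 - 1) ^ (rk M Set.univ - rk M ↑((B \ S) ∪ T)) *
          (X 1 - 1) ^ (((B \ S) ∪ T).card - rk M ↑((B \ S) ∪ T))
      = ∑ S ∈ (intF M B).powerset, ∑ T ∈ (extF M B).powerset,
        ((X 0 - 1) ^ S.card) * ((X 1 - 1) ^ T.card : MvPolynomial (Fin 2) ℤ) := by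
        refine Finset.sum_congr rfl fun S hS => Finset.sum_congr rfl fun T hT => ?_
        exact hstep S hS T hT
    _ = (∑ S ∈ (intF M B).powerset, (X 0 - 1) ^ S.card) *
        (∑ T ∈ (extF M B).powerset, (X 1 - 1) ^ T.card) := by
        rw [Finset.sum_mul_sum]
    _ = (X 0) ^ (intF M B).card * (X 1) ^ (extF M B).card := by
        rw [sum_powerset_pow_card, sum_powerset_pow_card, sub_add_cancel, sub_add_cancel]

end Crapo
open MvPolynomial in
theorem tutte_partial_derivative {α : Type*} [Fintype α] [LinearOrder α]
    (M : Matroid α) (hE : M.E = Set.univ) (p q : ℕ) :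
    (⇑(pderiv (0 : Fin 2)))^[p] ((⇑(pderiv (1 : Fin 2)))^[q] (tutte M)) =
      (p.factorial * q.factorial : ℤ) •
        ∑ A ∈ Finset.univ.powerset.filter
            (fun A : Finset α =>
              rk M Set.univ - rk M (A : Set α) = p ∧ A.card - rk M (A : Set α) = q),
          X 0 ^ (IntSet M (A : Set α)).ncard * X 1 ^ (ExtSet M (A : Set α)).ncard := by
  classical
  have hL : ∀ B ∈ basesF M,
      (⇑(pderiv (0 : Fin 2)))^[p] ((⇑(pderiv (1 : Fin 2)))^[q]
        ((X 0) ^ (intF M B).card * (X 1) ^ (extF M B).card : MvPolynomial (Fin 2) ℤ)) =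
      (((intF M B).card.descFactorial p * (extF M B).card.descFactorial q : ℕ) : ℤ) •
        ((X 0) ^ ((intF M B).card - p) * (X 1) ^ ((extF M B).card - q)) := by
    intro B _
    rw [pderiv1_iter, pd_iter_smul, pderiv0_iter, smul_smul]
    congr 1
    push_cast
    ring
  have hR : ∑ A ∈ Finset.univ.powerset.filter
        (fun A : Finset α =>
          rk M Set.univ - rk M (A : Set α) = p ∧ A.card - rk M (A : Set α) = q),
        (X 0 ^ (IntSet M (A : Set α)).ncard * X 1 ^ (ExtSet M (A : Set α)).ncard
          : MvPolynomial (Fin 2) ℤ) =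
      ∑ B ∈ basesF M, ((intF M B).card.choose p * (extF M B).card.choose q) •
        ((X 0) ^ ((intF M B).card - p) * (X 1) ^ ((extF M B).card - q)) := by
    rw [Finset.sum_filter, sum_partition hE]
    refine Finset.sum_congr rfl fun B hBmem => ?_
    rw [mem_basesF] at hBmem
    have hval : ∀ S ∈ (intF M B).powerset, ∀ T ∈ (extF M B).powerset,
        (if (rk M Set.univ - rk M ↑((B \ S) ∪ T) = p ∧
              ((B \ S) ∪ T).card - rk M ↑((B \ S) ∪ T) = q) then
          (X 0 ^ (IntSet M ↑((B \ S) ∪ T)).ncard * X 1 ^ (ExtSet M ↑((B \ S) ∪ T)).ncard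
            : MvPolynomial (Fin 2) ℤ)
          else 0) =
        (if (S.card = p ∧ T.card = q) then
          (X 0) ^ ((intF M B).card - p) * (X 1) ^ ((extF M B).card - q) else 0) := by
      intro S hS T hT
      have hS' : (S : Set α) ⊆ IntSet M ↑B := by
        rw [← coe_intF]; exact Finset.coe_subset.2 (Finset.mem_powerset.1 hS)
      have hT' : (T : Set α) ⊆ ExtSet M ↑B := by
        rw [← coe_extF]; exact Finset.coe_subset.2 (Finset.mem_powerset.1 hT)
      have hcond : (rk M Set.univ - rk M ↑((B \ S) ∪ T) = p ∧
          ((B \ S) ∪ T).card - rk M ↑((B \ S) ∪ T) = q) ↔ (S.card = p ∧ T.card = q) := by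
        rw [interval_corank hE hBmem hS' hT', interval_nullity hE hBmem hS' hT']
      by_cases hc : S.card = p ∧ T.card = q
      · rw [if_pos (hcond.2 hc), if_pos hc, interval_intCard hE hBmem hS' hT',
          interval_extCard hE hBmem hS' hT', hc.1, hc.2]
      · rw [if_neg (fun h => hc (hcond.1 h)), if_neg hc]
    rw [Finset.sum_congr rfl (fun S hS => Finset.sum_congr rfl (fun T hT => hval S hS T hT))]
    have inner : ∀ S ∈ (intF M B).powerset,
        (∑ T ∈ (extF M B).powerset, if (S.card = p ∧ T.card = q) then
          (X 0) ^ ((intF M B).card - p) * (X 1) ^ ((extF M B).card - q) else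
          (0 : MvPolynomial (Fin 2) ℤ)) =
        (if S.card = p then ((extF M B).card.choose q) •
          ((X 0) ^ ((intF M B).card - p) * (X 1) ^ ((extF M B).card - q)) else 0) := by
      intro S _
      by_cases hSp : S.card = p
      · rw [if_pos hSp]
        simp only [hSp, true_and]
        rw [← Finset.sum_filter, ← Finset.powersetCard_eq_filter, Finset.sum_const,
          Finset.card_powersetCard]
      · simp [hSp]
    rw [Finset.sum_congr rfl inner, ← Finset.sum_filter, ← Finset.powersetCard_eq_filter,
      Finset.sum_const, Finset.card_powersetCard, smul_smul]
  rw [crapo hE, pd_iter_sum, pd_iter_sum, Finset.sum_congr rfl hL, hR, Finset.smul_sum]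
  refine Finset.sum_congr rfl fun B _ => ?_
  rw [← natCast_zsmul, smul_smul]
  congr 1
  push_cast [Nat.descFactorial_eq_factorial_mul_choose]
  ring
end

section
/- Let M be a matroid on a finite linearly ordered set E. Then t(M; x+u, y+v) = Σ_{A⊆E} x^{ι_M(A)} u^{cr_M(A)} y^{ε_M(A)} v^{nl_M(A)}, as polynomials in four variables x, u, y, v. -/
open Set

/-- The Tutte polynomial of a matroid, evaluated at elements `x, y` of a commutative ring. -/
noncomputable def tutteEval {α : Type*} [Fintype α] {R : Type*} [CommRing R]
    (M : Matroid α) (x y : R) : R :=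
  ∑ A ∈ (Finset.univ : Finset α).powerset,
    (x - 1) ^ (rk M Set.univ - rk M (A : Set α)) *
      (y - 1) ^ (A.card - rk M (A : Set α))
namespace TutteAux

open Set Matroid

variable {α : Type*}

/-! ### Basic rank lemmas -/

section Rank

variable [Fintype α] {M : Matroid α} {A I J : Set α}

lemma rk_bddAbove (M : Matroid α) (A : Set α) :
    BddAbove (Set.ncard '' {I | I ⊆ A ∧ M.Indep I}) :=
  (Set.toFinite _).bddAbove

lemma rk_nonempty (M : Matroid α) (A : Set α) :
    (Set.ncard '' {I | I ⊆ A ∧ M.Indep I}).Nonempty :=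
  ⟨(∅ : Set α).ncard, ⟨∅, ⟨empty_subset _, M.empty_indep⟩, rfl⟩⟩

lemma le_rk (hI : M.Indep I) (hIA : I ⊆ A) : I.ncard ≤ rk M A :=
  le_csSup (rk_bddAbove M A) ⟨I, ⟨hIA, hI⟩, rfl⟩

lemma exists_rk_witness (M : Matroid α) (A : Set α) :
    ∃ I, I ⊆ A ∧ M.Indep I ∧ I.ncard = rk M A := by
  have := Nat.sSup_mem (rk_nonempty M A) (rk_bddAbove M A)
  obtain ⟨I, ⟨h1, h2⟩, h3⟩ := this
  exact ⟨I, h1, h2, h3⟩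

lemma rk_eq_of_maximal (hI : M.Indep I) (hIA : I ⊆ A)
    (hmax : ∀ x ∈ A, x ∉ I → ¬ M.Indep (insert x I)) : rk M A = I.ncard := by
  refine le_antisymm ?_ (le_rk hI hIA)
  obtain ⟨J, hJA, hJ, hJcard⟩ := exists_rk_witness M A
  rw [← hJcard]
  by_contra hlt
  push_neg at hlt
  obtain ⟨e, he, hei⟩ := hI.augment hJ (by
    rwa [← (Set.toFinite I).cast_ncard_eq, ← (Set.toFinite J).cast_ncard_eq,
      Nat.cast_lt])
  exact hmax e (hJA he.1) he.2 hei

lemma rk_mono (M : Matroid α) (hAB : A ⊆ J) : rk M A ≤ rk M J := by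
  obtain ⟨I, hIA, hI, hcard⟩ := exists_rk_witness M A
  rw [← hcard]
  exact le_rk hI (hIA.trans hAB)

lemma rk_le_ncard (M : Matroid α) (A : Set α) : rk M A ≤ A.ncard := by
  obtain ⟨I, hIA, _, hcard⟩ := exists_rk_witness M A
  rw [← hcard]
  exact Set.ncard_le_ncard hIA (Set.toFinite A)

lemma rk_indep (hI : M.Indep I) : rk M I = I.ncard :=
  le_antisymm (rk_le_ncard M I) (le_rk hI subset_rfl)

/-- Extend an independent subset of `A` to one of full rank. -/
lemma exists_rk_witness_superset (hI : M.Indep I) (hIA : I ⊆ A) :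
    ∃ J, I ⊆ J ∧ J ⊆ A ∧ M.Indep J ∧ J.ncard = rk M A := by
  classical
  have hbdd : BddAbove (Set.ncard '' {J | I ⊆ J ∧ J ⊆ A ∧ M.Indep J}) :=
    (Set.toFinite _).bddAbove
  have hne : (Set.ncard '' {J | I ⊆ J ∧ J ⊆ A ∧ M.Indep J}).Nonempty :=
    ⟨I.ncard, I, ⟨subset_rfl, hIA, hI⟩, rfl⟩
  obtain ⟨J, ⟨hIJ, hJA, hJ⟩, hJc⟩ := Nat.sSup_mem hne hbdd
  refine ⟨J, hIJ, hJA, hJ, (rk_eq_of_maximal hJ hJA fun x hx hxJ hxi ↦ ?_).symm⟩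
  have hle : (insert x J).ncard ≤ sSup (Set.ncard '' {J | I ⊆ J ∧ J ⊆ A ∧ M.Indep J}) :=
    le_csSup hbdd ⟨insert x J, ⟨hIJ.trans (subset_insert _ _),
      insert_subset hx hJA, hxi⟩, rfl⟩
  rw [← hJc, Set.ncard_insert_of_notMem hxJ (Set.toFinite J)] at hle
  omega

lemma rk_insert_le (M : Matroid α) (g : α) (A : Set α) :
    rk M (insert g A) ≤ rk M A + 1 := by
  obtain ⟨I, hIA, hI, hcard⟩ := exists_rk_witness M (insert g A)
  rw [← hcard]
  have h1 : I \ {g} ⊆ A := by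
    intro x hx; rcases hIA hx.1 with h | h
    · exact absurd h hx.2
    · exact h
  have hle := le_rk (hI.subset (diff_subset)) h1
  by_cases hg : g ∈ I
  · have h3 := Set.ncard_diff_singleton_add_one hg (Set.toFinite I)
    omega
  · rw [Set.diff_singleton_eq_self hg] at hle
    omega

lemma rk_univ_eq_ncard_base {B : Set α} (hB : M.IsBase B) : rk M univ = B.ncard := by
  refine rk_eq_of_maximal hB.indep (subset_univ _) fun x _ hxB hxi ↦ ?_
  have := hB.eq_of_subset_indep hxi (subset_insert _ _)
  exact hxB (by rw [this]; exact mem_insert _ _)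

end Rank

end TutteAux
namespace TutteAux

open Set Matroid

variable {α : Type*}

/-! ### Circuit basics -/

lemma circuit_not_indep {M : Matroid α} {C : Set α} (hC : _root_.IsCircuit M C) : ¬ M.Indep C := hC.1

lemma circuit_subset_ground {M : Matroid α} {C : Set α} (hC : _root_.IsCircuit M C) {e : α}
    (he : e ∈ C) (heE : e ∈ M.E) : C ⊆ M.E := by
  by_cases h : ∃ y ∈ C, y ≠ e
  · obtain ⟨y, hy, hye⟩ := h
    intro x hx
    by_cases hxy : x = y
    · exact hxy ▸ (hC.2 e he).subset_ground ⟨hy, hye⟩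
    · exact (hC.2 y hy).subset_ground ⟨hx, hxy⟩
  · push_neg at h
    intro x hx
    rw [h x hx]; exact heE

lemma exists_circuit_subset {M : Matroid α} {C : Set α} (hfin : C.Finite)
    (hdep : ¬ M.Indep C) : ∃ D ⊆ C, _root_.IsCircuit M D := by
  classical
  have H : ∀ (n : ℕ) (C : Set α), C.Finite → ¬ M.Indep C → C.ncard = n →
      ∃ D ⊆ C, _root_.IsCircuit M D := by
    intro n
    induction n using Nat.strong_induction_on with
    | _ n ih =>
      intro C hfin hdep hn
      by_cases hmin : ∀ x ∈ C, M.Indep (C \ {x})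
      · exact ⟨C, subset_rfl, hdep, hmin⟩
      · push_neg at hmin
        obtain ⟨x, hx, hdx⟩ := hmin
        obtain ⟨D, hD, hDc⟩ := ih ((C \ {x}).ncard)
          (by rw [← hn]; exact Set.ncard_lt_ncard (Set.sdiff_singleton_ssubset.mpr hx) hfin)
          _ (hfin.subset diff_subset) hdx rfl
        exact ⟨D, hD.trans diff_subset, hDc⟩
  exact H _ C hfin hdep rfl

lemma circuit_nonempty {M : Matroid α} {C : Set α} (hC : _root_.IsCircuit M C) : C.Nonempty := by
  rw [Set.nonempty_iff_ne_empty]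
  rintro rfl
  exact hC.1 M.empty_indep

/-- If a circuit is contained in an independent-closed situation: a subset of a circuit other
than the circuit itself is independent. -/
lemma circuit_ssubset_indep {M : Matroid α} {C D : Set α} (hC : _root_.IsCircuit M C) (hDC : D ⊂ C) :
    M.Indep D := by
  obtain ⟨x, hxC, hxD⟩ := exists_of_ssubset hDC
  exact (hC.2 x hxC).subset (subset_diff_singleton hDC.subset hxD)

/-- Two circuits, one contained in the other, are equal. -/
lemma circuit_eq_of_subset {M : Matroid α} {C D : Set α} (hC : _root_.IsCircuit M C)
    (hD : _root_.IsCircuit M D) (hDC : D ⊆ C) : D = C := by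
  by_contra hne
  exact hD.1 (circuit_ssubset_indep hC (ssubset_of_subset_of_ne hDC hne))

/-! ### Loops and coloops -/

/-- If `g` is a coloop (i.e. `{g}` is codependent), every independent set extends by `g`. -/
lemma coloop_insert_indep {M : Matroid α} {g : α} (hgE : g ∈ M.E)
    (hco : ¬ M✶.Indep {g}) {I : Set α} (hI : M.Indep I) : M.Indep (insert g I) := by
  obtain ⟨B, hB, hIB⟩ := hI.exists_isBase_superset
  have hgB : g ∈ B := by
    by_contra hgB
    exact hco (M.dual_indep_iff_exists (by simpa using hgE) |>.mpr
      ⟨B, hB, by simpa using hgB⟩)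
  exact hB.indep.subset (insert_subset hgB hIB)

/-- A loop is not a coloop. -/
lemma loop_not_coloop {M : Matroid α} {g : α} (hgE : g ∈ M.E) (hl : ¬ M.Indep {g}) :
    M✶.Indep {g} := by
  obtain ⟨B, hB⟩ := M.exists_isBase
  have hgB : g ∉ B := fun hgB ↦ hl (hB.indep.subset (by simpa using hgB))
  exact M.dual_indep_iff_exists (by simpa using hgE) |>.mpr ⟨B, hB, by simpa using hgB⟩

/-- A coloop is in no circuit. -/
lemma coloop_not_mem_circuit {M : Matroid α} {g : α} (hgE : g ∈ M.E)
    (hco : ¬ M✶.Indep {g}) {C : Set α} (hC : _root_.IsCircuit M C) : g ∉ C := by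
  intro hgC
  have h := coloop_insert_indep hgE hco (hC.2 g hgC)
  rw [Set.insert_diff_singleton, Set.insert_eq_self.mpr hgC] at h
  exact hC.1 h

/-- A loop is in no circuit other than `{g}` itself. -/
lemma loop_mem_circuit {M : Matroid α} {g : α} (hl : ¬ M.Indep {g}) {C : Set α}
    (hC : _root_.IsCircuit M C) (hgC : g ∈ C) : C = {g} := by
  by_contra hne
  obtain ⟨x, hxC, hxg⟩ : ∃ x ∈ C, x ≠ g := by
    by_contra h
    push_neg at h
    exact hne (Set.eq_singleton_iff_unique_mem.mpr ⟨hgC, h⟩)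
  exact hl ((hC.2 x hxC).subset (by simp [singleton_subset_iff, hgC, hxg.symm]))

lemma loop_is_circuit {M : Matroid α} {g : α} (hl : ¬ M.Indep {g}) :
    _root_.IsCircuit M {g} := by
  refine ⟨hl, fun x hx ↦ ?_⟩
  simp only [mem_singleton_iff] at hx
  subst hx
  simpa using M.empty_indep

end TutteAux
namespace TutteAux

open Set Matroid

variable {α : Type*}

/-! ### Deletion and contraction of a single element -/

/-- Deletion of the element `g`. -/
noncomputable def del (M : Matroid α) (g : α) : Matroid α := M ↾ (M.E \ {g})

/-- Contraction of the element `g`. -/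
noncomputable def con (M : Matroid α) (g : α) : Matroid α := (M✶ ↾ (M✶.E \ {g}))✶

@[simp] lemma del_ground (M : Matroid α) (g : α) : (del M g).E = M.E \ {g} := rfl

@[simp] lemma con_ground (M : Matroid α) (g : α) : (con M g).E = M.E \ {g} := rfl

@[simp] lemma del_indep_iff {M : Matroid α} {g : α} {I : Set α} :
    (del M g).Indep I ↔ M.Indep I ∧ I ⊆ M.E \ {g} :=
  Matroid.restrict_indep_iff

lemma con_dual (M : Matroid α) (g : α) : (con M g)✶ = del M✶ g := by
  simp [con, del, dual_dual]

lemma del_dual (M : Matroid α) (g : α) : (del M g)✶ = con M✶ g := by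
  rw [con, dual_dual, del]

lemma con_indep_iff [Fintype α] {M : Matroid α} {g : α} (hgE : g ∈ M.E)
    (hg : M.Indep {g}) {I : Set α} :
    (con M g).Indep I ↔ I ⊆ M.E \ {g} ∧ M.Indep (insert g I) := by
  constructor
  · intro hI
    obtain ⟨hIss, B, hB, hdisj⟩ :=
      (Matroid.dual_indep_iff_exists' (M := M✶ ↾ (M✶.E \ {g}))).1 hI
    rw [Matroid.restrict_ground_eq] at hIss
    rw [Matroid.isBase_restrict_iff diff_subset] at hB
    have hBbase : M✶.IsBase B := by
      obtain ⟨B₁, hB₁, hBB₁⟩ := hB.indep.exists_isBase_superset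
      have hB₁B : B₁ ⊆ insert g B := by
        intro x hx
        by_cases hxg : x = g
        · exact hxg ▸ mem_insert _ _
        refine mem_insert_of_mem _ ?_
        by_contra hxB
        have hxE : x ∈ M✶.E := hB₁.subset_ground hx
        have hins : M✶.Indep (insert x B) := hB₁.indep.subset (insert_subset hx hBB₁)
        have heq := hB.eq_of_subset_indep hins (subset_insert _ _)
          (insert_subset ⟨hxE, hxg⟩ hB.subset)
        exact hxB (heq ▸ mem_insert _ _)
      by_cases hgB₁ : g ∈ B₁
      · exfalso
        obtain ⟨B₀, hB₀, hgB₀⟩ := hg.exists_isBase_superset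
        have hD : M✶.IsBase (M.E \ B₀) := hB₀.compl_isBase_dual
        have hDg : (M.E \ B₀) ⊆ M✶.E \ {g} := by
          rw [dual_ground]
          exact diff_subset_diff_right (by simpa using hgB₀ rfl)
        have hgB : g ∉ B := fun h ↦ (hB.subset h).2 rfl
        have hBlt : B.encard < B₁.encard :=
          (Set.toFinite B).encard_lt_encard ⟨hBB₁, fun hss ↦ hgB (hss hgB₁)⟩
        have hBlt' : B.encard < (M.E \ B₀).encard := by
          rwa [hD.encard_eq_encard_of_isBase hB₁]
        obtain ⟨x, hx, hxi⟩ := hB.indep.augment hD.indep hBlt'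
        have heq := hB.eq_of_subset_indep hxi (subset_insert _ _)
          (insert_subset (hDg hx.1) hB.subset)
        exact hx.2 (heq ▸ mem_insert _ _)
      · have hsub : B₁ ⊆ B := fun x hx ↦ by
          rcases hB₁B hx with h | h
          · exact absurd h (by rintro rfl; exact hgB₁ hx)
          · exact h
        rwa [hB₁.eq_of_subset_indep hB.indep hsub] at hB₁
    have hMbase : M.IsBase (M.E \ B) := hBbase.compl_isBase_of_dual
    have hgB : g ∉ B := fun h ↦ (hB.subset h).2 rfl
    refine ⟨hIss, hMbase.indep.subset (insert_subset ⟨hgE, hgB⟩ ?_)⟩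
    intro x hx
    exact ⟨(hIss hx).1, fun hxB ↦ (hdisj.ne_of_mem hx hxB) rfl⟩
  · rintro ⟨hIss, hIi⟩
    obtain ⟨B₀, hB₀, hgIB₀⟩ := hIi.exists_isBase_superset
    have hD : M✶.IsBase (M.E \ B₀) := hB₀.compl_isBase_dual
    have hgB0 : g ∈ B₀ := hgIB₀ (mem_insert _ _)
    have hDss : M.E \ B₀ ⊆ M✶.E \ {g} := by
      rw [dual_ground]
      exact diff_subset_diff_right (by simpa using hgB0)
    have hDbasis : (M✶ ↾ (M✶.E \ {g})).IsBase (M.E \ B₀) := by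
      rw [Matroid.isBase_restrict_iff diff_subset]
      refine hD.indep.isBasis_of_maximal_subset hDss (fun J hJ hDJ hJss ↦ ?_) diff_subset
      rw [hD.eq_of_subset_indep hJ hDJ]
    rw [con, Matroid.dual_indep_iff_exists', Matroid.restrict_ground_eq]
    refine ⟨fun x hx ↦ ⟨(hIss hx).1, (hIss hx).2⟩, ⟨M.E \ B₀, hDbasis, ?_⟩⟩
    rw [Set.disjoint_iff_inter_eq_empty]
    ext x
    simp only [mem_inter_iff, mem_empty_iff_false, iff_false, not_and]
    intro hxI hxD
    exact hxD.2 (hgIB₀ (mem_insert_of_mem _ hxI))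

end TutteAux
namespace TutteAux

open Set Matroid

variable {α : Type*} [Fintype α]

/-! ### Rank transfer lemmas -/

lemma rk_univ_eq_rk_ground (M : Matroid α) : rk M univ = rk M M.E := by
  unfold rk
  congr 1
  ext n
  constructor
  · rintro ⟨I, ⟨-, hI⟩, rfl⟩
    exact ⟨I, ⟨hI.subset_ground, hI⟩, rfl⟩
  · rintro ⟨I, ⟨-, hI⟩, rfl⟩
    exact ⟨I, ⟨subset_univ _, hI⟩, rfl⟩

lemma rk_del_eq {M : Matroid α} {g : α} {A : Set α} (hA : A ⊆ M.E \ {g}) :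
    rk (del M g) A = rk M A := by
  unfold rk
  congr 1
  ext n
  constructor
  · rintro ⟨I, ⟨hIA, hI⟩, rfl⟩
    exact ⟨I, ⟨hIA, (del_indep_iff.1 hI).1⟩, rfl⟩
  · rintro ⟨I, ⟨hIA, hI⟩, rfl⟩
    exact ⟨I, ⟨hIA, del_indep_iff.2 ⟨hI, hIA.trans hA⟩⟩, rfl⟩

lemma rk_con_insert {M : Matroid α} {g : α} (hgE : g ∈ M.E) (hg : M.Indep {g})
    {A : Set α} (hA : A ⊆ M.E \ {g}) :
    rk M (insert g A) = rk (con M g) A + 1 := by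
  have hgA : g ∉ A := fun h ↦ (hA h).2 rfl
  refine le_antisymm ?_ ?_
  · obtain ⟨J, hgJ, hJA, hJ, hJc⟩ := exists_rk_witness_superset hg
      (singleton_subset_iff.mpr (mem_insert g A))
    have hJg : g ∈ J := hgJ rfl
    have hJdiff : J \ {g} ⊆ A := by
      intro x hx
      rcases hJA hx.1 with h | h
      · exact absurd h hx.2
      · exact h
    have hconi : (con M g).Indep (J \ {g}) := by
      rw [con_indep_iff hgE hg]
      refine ⟨hJdiff.trans hA, ?_⟩
      rwa [Set.insert_diff_singleton, Set.insert_eq_self.mpr hJg]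
    have hle := le_rk (M := con M g) hconi hJdiff
    have hcard := Set.ncard_diff_singleton_add_one hJg (Set.toFinite J)
    omega
  · obtain ⟨I, hIA, hI, hIc⟩ := exists_rk_witness (con M g) A
    have hIi : M.Indep (insert g I) := ((con_indep_iff hgE hg).1 hI).2
    have hgI : g ∉ I := fun h ↦ hgA (hIA h)
    have hle := le_rk hIi (insert_subset_insert hIA)
    rw [Set.ncard_insert_of_notMem hgI (Set.toFinite I)] at hle
    omega

lemma rk_univ_con {M : Matroid α} {g : α} (hgE : g ∈ M.E) (hg : M.Indep {g}) :
    rk M univ = rk (con M g) univ + 1 := by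
  rw [rk_univ_eq_rk_ground M, rk_univ_eq_rk_ground (con M g), con_ground,
    ← rk_con_insert hgE hg (subset_refl _), Set.insert_diff_singleton,
    Set.insert_eq_self.mpr hgE]

lemma rk_univ_del {M : Matroid α} {g : α} (hnc : M✶.Indep {g}) :
    rk (del M g) univ = rk M univ := by
  obtain ⟨-, B, hB, hdisj⟩ := Matroid.dual_indep_iff_exists'.1 hnc
  have hgB : g ∉ B := fun h ↦ hdisj.ne_of_mem rfl h rfl
  refine le_antisymm ?_ ?_
  · obtain ⟨I, -, hI, hIc⟩ := exists_rk_witness (del M g) univ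
    rw [← hIc]
    exact le_rk (del_indep_iff.1 hI).1 (subset_univ _)
  · rw [rk_univ_eq_ncard_base hB]
    exact le_rk (M := del M g)
      (del_indep_iff.2 ⟨hB.indep, subset_diff_singleton hB.subset_ground hgB⟩) (subset_univ _)

lemma rk_loop_insert {M : Matroid α} {g : α} (hl : ¬ M.Indep {g}) (A : Set α) :
    rk M (insert g A) = rk M A := by
  refine le_antisymm ?_ (rk_mono M (subset_insert _ _))
  obtain ⟨I, hIA, hI, hIc⟩ := exists_rk_witness M (insert g A)
  have hgI : g ∉ I := fun h ↦ hl (hI.subset (singleton_subset_iff.mpr h))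
  have hIA' : I ⊆ A := fun x hx ↦ by
    rcases hIA hx with h | h
    · exact absurd (h ▸ hx) hgI
    · exact h
  rw [← hIc]
  exact le_rk hI hIA'

lemma rk_coloop_insert {M : Matroid α} {g : α} (hgE : g ∈ M.E) (hco : ¬ M✶.Indep {g})
    {A : Set α} (hgA : g ∉ A) : rk M (insert g A) = rk M A + 1 := by
  refine le_antisymm (rk_insert_le M g A) ?_
  obtain ⟨I, hIA, hI, hIc⟩ := exists_rk_witness M A
  have hgI : g ∉ I := fun h ↦ hgA (hIA h)
  have := le_rk (coloop_insert_indep hgE hco hI) (insert_subset_insert hIA)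
  rw [Set.ncard_insert_of_notMem hgI (Set.toFinite I)] at this
  omega

end TutteAux
namespace TutteAux

open Set Matroid

variable {α : Type*} [Fintype α]

/-! ### Circuit transfer lemmas -/

lemma del_circuit_iff {M : Matroid α} {g : α} {C : Set α} (hC : C ⊆ M.E \ {g}) :
    _root_.IsCircuit (del M g) C ↔ _root_.IsCircuit M C := by
  constructor
  · rintro ⟨h1, h2⟩
    refine ⟨fun hi ↦ h1 (del_indep_iff.2 ⟨hi, hC⟩), fun x hx ↦ (del_indep_iff.1 (h2 x hx)).1⟩
  · rintro ⟨h1, h2⟩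
    refine ⟨fun hi ↦ h1 (del_indep_iff.1 hi).1,
      fun x hx ↦ del_indep_iff.2 ⟨h2 x hx, diff_subset.trans hC⟩⟩

lemma con_circuit_of_mem {M : Matroid α} {g : α} (hgE : g ∈ M.E) (hg : M.Indep {g})
    {C : Set α} (hC : _root_.IsCircuit M C) (hCE : C ⊆ M.E) (hgC : g ∈ C) (hne : C ≠ {g}) :
    _root_.IsCircuit (con M g) (C \ {g}) := by
  constructor
  · rw [con_indep_iff hgE hg]
    rintro ⟨-, hi⟩
    rw [Set.insert_diff_singleton, Set.insert_eq_self.mpr hgC] at hi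
    exact hC.1 hi
  · intro x hx
    rw [con_indep_iff hgE hg]
    refine ⟨fun y hy ↦ ⟨hCE hy.1.1, hy.1.2⟩, ?_⟩
    · rw [Set.diff_diff_comm, Set.insert_diff_singleton]
      have hgCx : g ∈ C \ {x} :=
        ⟨hgC, fun h ↦ hx.2 (mem_singleton_iff.mpr (mem_singleton_iff.1 h).symm)⟩
      rw [Set.insert_eq_self.mpr hgCx]
      exact hC.2 x hx.1
  

lemma con_circuit_cases {M : Matroid α} {g : α} (hgE : g ∈ M.E) (hg : M.Indep {g})
    {D : Set α} (hD : _root_.IsCircuit (con M g) D) (hDE : D ⊆ M.E \ {g}) :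
    _root_.IsCircuit M D ∨ _root_.IsCircuit M (insert g D) := by
  have hdep : ¬ M.Indep (insert g D) := by
    intro hi
    exact hD.1 ((con_indep_iff hgE hg).2 ⟨hDE, hi⟩)
  obtain ⟨C, hCD, hC⟩ := exists_circuit_subset (Set.toFinite _) hdep
  by_cases hgC : g ∈ C
  · have hCne : C ≠ {g} := by
      rintro rfl
      exact hC.1 hg
    have hCE : C ⊆ M.E := circuit_subset_ground hC hgC hgE
    have hcc := con_circuit_of_mem hgE hg hC hCE hgC hCne
    have hsub : C \ {g} ⊆ D := fun x hx ↦ by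
      rcases hCD hx.1 with h | h
      · exact absurd h hx.2
      · exact h
    have heq := circuit_eq_of_subset hD hcc hsub
    right
    rw [← heq, Set.insert_diff_singleton, Set.insert_eq_self.mpr hgC]
    exact hC
  · have hCD' : C ⊆ D := fun x hx ↦ by
      rcases hCD hx with h | h
      · exact absurd (h ▸ hx) hgC
      · exact h
    have hCdep : ¬ (con M g).Indep C := by
      intro hi
      obtain ⟨-, hi'⟩ := (con_indep_iff hgE hg).1 hi
      exact hC.1 (hi'.subset (subset_insert _ _))
    have : C = D := by
      by_contra hne
      exact hCdep (circuit_ssubset_indep hD (ssubset_of_subset_of_ne hCD' hne))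
    left
    exact this ▸ hC

lemma con_circuit_avoid {M : Matroid α} {g : α} (hgE : g ∈ M.E) (hg : M.Indep {g})
    {C : Set α} (hC : _root_.IsCircuit M C) (hCE : C ⊆ M.E \ {g}) {e : α} (he : e ∈ C) :
    ∃ D, _root_.IsCircuit (con M g) D ∧ e ∈ D ∧ D ⊆ C := by
  have hgC : g ∉ C := fun h ↦ (hCE h).2 rfl
  -- a maximal (con M g)-independent subset of C \ {e}
  obtain ⟨J, hJA, hJ, hJc⟩ := exists_rk_witness (con M g) (C \ {e})
  have hJC : J ⊆ C := hJA.trans diff_subset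
  have hgJ : g ∉ J := fun h ↦ hgC (hJC h)
  have heJ : e ∉ J := fun h ↦ (hJA h).2 rfl
  have hJi : M.Indep (insert g J) := ((con_indep_iff hgE hg).1 hJ).2
  -- (insert g J) is a maximal independent subset of insert g (C \ {e})
  have hrk : rk M (insert g (C \ {e})) = (insert g J).ncard := by
    refine rk_eq_of_maximal hJi (insert_subset_insert hJA) fun x hx hxJ hxi ↦ ?_
    rcases hx with rfl | hx
    · exact hxJ (mem_insert _ _)
    · have hxg : x ≠ g := fun h ↦ hgC (h ▸ hx.1)
      have hxJ' : x ∉ J := fun h ↦ hxJ (mem_insert_of_mem _ h)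
      have hins : (con M g).Indep (insert x J) := by
        rw [con_indep_iff hgE hg]
        refine ⟨insert_subset (hCE hx.1) (hJC.trans hCE), ?_⟩
        rwa [Set.insert_comm] at hxi
      have hle := le_rk (M := con M g) hins (insert_subset hx hJA)
      rw [Set.ncard_insert_of_notMem hxJ' (Set.toFinite J), hJc] at hle
      omega
  have hCe_card : (C \ {e}).ncard + 1 = C.ncard :=
    Set.ncard_diff_singleton_add_one he (Set.toFinite C)
  have hrk_ge : C.ncard - 1 ≤ rk M (insert g (C \ {e})) := by
    have h1 : rk M (C \ {e}) = (C \ {e}).ncard := rk_indep (hC.2 e he)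
    have h2 := rk_mono M (subset_insert g (C \ {e}))
    omega
  have hJgcard : (insert g J).ncard = J.ncard + 1 :=
    Set.ncard_insert_of_notMem hgJ (Set.toFinite J)
  -- insert e J is (con M g)-dependent
  have hdep : ¬ (con M g).Indep (insert e J) := by
    intro hiJ
    have hKi : M.Indep (insert g (insert e J)) := ((con_indep_iff hgE hg).1 hiJ).2
    by_cases hJfull : J = C \ {e}
    · subst hJfull
      rw [Set.insert_diff_singleton, Set.insert_eq_self.mpr he] at hKi
      exact hC.1 (hKi.subset (subset_insert _ _))
    · -- J ⊊ C \ {e}, so J.ncard = C.ncard - 2 exactly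
      have hJlt : J.ncard < (C \ {e}).ncard :=
        Set.ncard_lt_ncard (ssubset_of_subset_of_ne hJA hJfull) (Set.toFinite _)
      have hJcard : J.ncard + 2 = C.ncard := by omega
      have heK : e ∉ insert g J := by
        simp only [mem_insert_iff]
        push_neg
        exact ⟨fun h ↦ hgC (h ▸ he), heJ⟩
      have hKcard : (insert g (insert e J)).ncard = J.ncard + 2 := by
        rw [Set.insert_comm, Set.ncard_insert_of_notMem heK (Set.toFinite _), hJgcard]
      -- augment C \ {e} into insert g (insert e J)
      have hlt : (C \ {e}).encard < (insert g (insert e J)).encard := by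
        rw [← (Set.toFinite _).cast_ncard_eq, ← (Set.toFinite _).cast_ncard_eq,
          Nat.cast_lt, hKcard]
        omega
      obtain ⟨z, hz, hzi⟩ := (hC.2 e he).augment hKi hlt
      have hzge : z = g ∨ z = e := by
        rcases mem_insert_iff.1 hz.1 with rfl | hz1
        · exact Or.inl rfl
        rcases mem_insert_iff.1 hz1 with rfl | hzJ
        · exact Or.inr rfl
        · exact absurd (⟨hJC hzJ, fun hh ↦ heJ (mem_singleton_iff.1 hh ▸ hzJ)⟩ :
            z ∈ C \ {e}) hz.2
      rcases hzge with hzg | hze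
      · -- insert g (C \ {e}) independent, contradicting its rank
        have hzi' : M.Indep (insert g (C \ {e})) := hzg ▸ hzi
        have := rk_indep hzi'
        rw [hrk, hJgcard] at this
        have : (insert g (C \ {e})).ncard = J.ncard + 1 := this.symm
        have hgCe : g ∉ C \ {e} := fun h ↦ hgC h.1
        rw [Set.ncard_insert_of_notMem hgCe (Set.toFinite _)] at this
        omega
      · have hzi' : M.Indep (insert e (C \ {e})) := hze ▸ hzi
        rw [Set.insert_diff_singleton, Set.insert_eq_self.mpr he] at hzi'
        exact hC.1 hzi'
  have hssK : insert e J ⊆ C := insert_subset he hJC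
  obtain ⟨D, hDK, hD⟩ := exists_circuit_subset (Set.toFinite _) hdep
  refine ⟨D, hD, ?_, hDK.trans hssK⟩
  by_contra heD
  have hDJ : D ⊆ J := fun x hx ↦ by
    rcases hDK hx with rfl | h
    · exact absurd hx heD
    · exact h
  exact hD.1 (hJ.subset hDJ)

lemma coloop_con_circuit_iff {M : Matroid α} {g : α} (hgE : g ∈ M.E)
    (hco : ¬ M✶.Indep {g}) {C : Set α} (hCE : C ⊆ M.E \ {g}) :
    _root_.IsCircuit (con M g) C ↔ _root_.IsCircuit M C := by
  have hg : M.Indep {g} := by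
    have := coloop_insert_indep hgE hco M.empty_indep
    simpa using this
  constructor
  · intro hD
    rcases con_circuit_cases hgE hg hD hCE with h | h
    · exact h
    · exact absurd (mem_insert _ _) (coloop_not_mem_circuit hgE hco h)
  · intro hC
    constructor
    · rw [con_indep_iff hgE hg]
      rintro ⟨-, hi⟩
      exact hC.1 (hi.subset (subset_insert _ _))
    · intro x hx
      rw [con_indep_iff hgE hg]
      exact ⟨diff_subset.trans hCE, coloop_insert_indep hgE hco (hC.2 x hx)⟩

end TutteAux
namespace TutteAux

open Set Matroid

variable {α : Type*} [Fintype α] [LinearOrder α]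

/-- If `g` is the largest element of the ground set, a circuit with smallest element `g`
is `{g}`. -/
lemma smallest_g_circuit {M : Matroid α} {g : α} (hmax : ∀ x ∈ M.E, x ≤ g)
    {C : Set α} (hC : _root_.IsCircuit M C) (hCE : C ⊆ M.E) (hsm : SmallestIn g C) : C = {g} := by
  apply Set.eq_singleton_iff_unique_mem.mpr
  refine ⟨hsm.1, fun f hf ↦ le_antisymm (hmax f (hCE hf)) (hsm.2 f hf)⟩

section IntSetLemmas

variable {M : Matroid α} {g : α} {A : Set α}

lemma intSet_del (hmax : ∀ x ∈ M.E, x ≤ g) (hnc : M✶.Indep {g})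
    (hA : A ⊆ M.E \ {g}) : IntSet M A = IntSet (del M g) A := by
  have hgE' : g ∈ M✶.E := hnc.subset_ground rfl
  have hgA : g ∉ A := fun h ↦ (hA h).2 rfl
  ext e
  simp only [IntSet, mem_setOf_eq, _root_.IsCocircuit]
  constructor
  · rintro ⟨heA, C, hC, hCss, hsm⟩
    refine ⟨heA, ?_⟩
    have heE : e ∈ M✶.E := by rw [dual_ground]; exact (hA heA).1
    have heg : e ≠ g := fun h ↦ (hA heA).2 (by simp [h])
    have hCE : C ⊆ M✶.E := circuit_subset_ground hC hsm.1 heE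
    rw [del_dual]
    by_cases hgC : g ∈ C
    · have hne : C ≠ {g} := fun h ↦ heg (by simpa [h] using hsm.1)
      exact ⟨C \ {g}, con_circuit_of_mem hgE' hnc hC hCE hgC hne,
        diff_subset.trans hCss, ⟨⟨hsm.1, by simp [heg]⟩, fun f hf ↦ hsm.2 f hf.1⟩⟩
    · have hCE' : C ⊆ M✶.E \ {g} := subset_diff_singleton hCE hgC
      obtain ⟨D, hD, heD, hDC⟩ := con_circuit_avoid hgE' hnc hC hCE' hsm.1
      exact ⟨D, hD, hDC.trans hCss, heD, fun f hf ↦ hsm.2 f (hDC hf)⟩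
  · rintro ⟨heA, C, hC, hCss, hsm⟩
    refine ⟨heA, ?_⟩
    rw [del_dual] at hC
    have heE : e ∈ M✶.E := by rw [dual_ground]; exact (hA heA).1
    have heg : e ≠ g := fun h ↦ (hA heA).2 (by simp [h])
    have hCE : C ⊆ M✶.E \ {g} :=
      circuit_subset_ground hC hsm.1 (show e ∈ (con M✶ g).E from ⟨heE, by simp [heg]⟩)
    rcases con_circuit_cases hgE' hnc hC hCE with h | h
    · exact ⟨C, h, hCss, hsm⟩
    · refine ⟨insert g C, h, insert_subset (Or.inl hgA) hCss,
        mem_insert_of_mem _ hsm.1, ?_⟩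
      rintro f (rfl | hf)
      · exact hmax e ((hA heA).1)
      · exact hsm.2 f hf

lemma intSet_con (hmax : ∀ x ∈ M.E, x ≤ g) (hgE : g ∈ M.E) (hnc : M✶.Indep {g})
    (hA : A ⊆ M.E \ {g}) : IntSet M (insert g A) = IntSet (con M g) A := by
  have hgE' : g ∈ M✶.E := by rwa [dual_ground]
  have hgA : g ∉ A := fun h ↦ (hA h).2 rfl
  ext e
  simp only [IntSet, mem_setOf_eq, _root_.IsCocircuit]
  constructor
  · rintro ⟨heA, C, hC, hCss, hsm⟩
    rcases mem_insert_iff.1 heA with rfl | heA'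
    · -- e = g : impossible since g is not a coloop
      exfalso
      have hCE : C ⊆ M✶.E := circuit_subset_ground hC hsm.1 hgE'
      have := smallest_g_circuit (M := M✶) (fun x hx ↦ hmax x hx) hC hCE hsm
      rw [this] at hC
      exact hC.1 hnc
    · refine ⟨heA', ?_⟩
      have heg : e ≠ g := fun h ↦ (hA heA').2 (by simp [h])
      have heE : e ∈ M✶.E := by rw [dual_ground]; exact (hA heA').1
      have hgC : g ∉ C := by
        intro hgC
        rcases hCss hgC with h | h
        · exact h (mem_insert _ _)
        · exact heg (mem_singleton_iff.1 h).symm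
      have hCE : C ⊆ M✶.E \ {g} :=
        subset_diff_singleton (circuit_subset_ground hC hsm.1 heE) hgC
      rw [con_dual]
      refine ⟨C, (del_circuit_iff hCE).2 hC, ?_, hsm⟩
      intro x hx
      rcases hCss hx with h | h
      · exact Or.inl (fun hxA ↦ h (mem_insert_of_mem _ hxA))
      · exact Or.inr h
  · rintro ⟨heA, C, hC, hCss, hsm⟩
    refine ⟨mem_insert_of_mem _ heA, ?_⟩
    rw [con_dual] at hC
    have heg : e ≠ g := fun h ↦ (hA heA).2 (by simp [h])
    have heE : e ∈ M✶.E := by rw [dual_ground]; exact (hA heA).1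
    have hCE : C ⊆ M✶.E \ {g} :=
      circuit_subset_ground hC hsm.1 (show e ∈ (del M✶ g).E from ⟨heE, by simp [heg]⟩)
    refine ⟨C, (del_circuit_iff hCE).1 hC, ?_, hsm⟩
    intro x hx
    have hxg : x ≠ g := fun h ↦ (hCE hx).2 (by simp [h])
    rcases hCss hx with h | h
    · exact Or.inl (by simp only [mem_compl_iff, mem_insert_iff]; push_neg; exact ⟨hxg, h⟩)
    · exact Or.inr h

lemma intSet_coloop_eq (hgE : g ∈ M.E) (hco : ¬ M✶.Indep {g})
    (hA : A ⊆ M.E \ {g}) : IntSet M A = IntSet (con M g) A := by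
  have hgE' : g ∈ M✶.E := by rwa [dual_ground]
  ext e
  simp only [IntSet, mem_setOf_eq, _root_.IsCocircuit]
  constructor
  · rintro ⟨heA, C, hC, hCss, hsm⟩
    refine ⟨heA, ?_⟩
    have heg : e ≠ g := fun h ↦ (hA heA).2 (by simp [h])
    have heE : e ∈ M✶.E := by rw [dual_ground]; exact (hA heA).1
    have hgC : g ∉ C := by
      intro hgC
      have := loop_mem_circuit hco hC hgC
      exact heg (by simpa [this] using hsm.1)
    have hCE : C ⊆ M✶.E \ {g} :=
      subset_diff_singleton (circuit_subset_ground hC hsm.1 heE) hgC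
    rw [con_dual]
    exact ⟨C, (del_circuit_iff hCE).2 hC, hCss, hsm⟩
  · rintro ⟨heA, C, hC, hCss, hsm⟩
    refine ⟨heA, ?_⟩
    rw [con_dual] at hC
    have heg : e ≠ g := fun h ↦ (hA heA).2 (by simp [h])
    have heE : e ∈ M✶.E := by rw [dual_ground]; exact (hA heA).1
    have hCE : C ⊆ M✶.E \ {g} :=
      circuit_subset_ground hC hsm.1 (show e ∈ (del M✶ g).E from ⟨heE, by simp [heg]⟩)
    exact ⟨C, (del_circuit_iff hCE).1 hC, hCss, hsm⟩

lemma intSet_coloop_insert (hgE : g ∈ M.E) (hco : ¬ M✶.Indep {g})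
    (hA : A ⊆ M.E \ {g}) :
    IntSet M (insert g A) = insert g (IntSet (con M g) A) := by
  have hgE' : g ∈ M✶.E := by rwa [dual_ground]
  have hgA : g ∉ A := fun h ↦ (hA h).2 rfl
  ext e
  simp only [IntSet, mem_setOf_eq, _root_.IsCocircuit]
  constructor
  · rintro ⟨heA, C, hC, hCss, hsm⟩
    rcases mem_insert_iff.1 heA with rfl | heA'
    · exact mem_insert _ _
    · refine mem_insert_of_mem _ ⟨heA', ?_⟩
      have heg : e ≠ g := fun h ↦ (hA heA').2 (by simp [h])
      have heE : e ∈ M✶.E := by rw [dual_ground]; exact (hA heA').1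
      have hgC : g ∉ C := by
        intro hgC
        rcases hCss hgC with h | h
        · exact h (mem_insert _ _)
        · exact heg (mem_singleton_iff.1 h).symm
      have hCE : C ⊆ M✶.E \ {g} :=
        subset_diff_singleton (circuit_subset_ground hC hsm.1 heE) hgC
      rw [con_dual]
      refine ⟨C, (del_circuit_iff hCE).2 hC, ?_, hsm⟩
      intro x hx
      rcases hCss hx with h | h
      · exact Or.inl (fun hxA ↦ h (mem_insert_of_mem _ hxA))
      · exact Or.inr h
  · rintro (rfl | ⟨heA, C, hC, hCss, hsm⟩)
    · refine ⟨mem_insert _ _, {e}, loop_is_circuit hco, ?_, ⟨rfl, by simp⟩⟩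
      intro x hx
      exact Or.inr hx
    · refine ⟨mem_insert_of_mem _ heA, ?_⟩
      rw [con_dual] at hC
      have heg : e ≠ g := fun h ↦ (hA heA).2 (by simp [h])
      have heE : e ∈ M✶.E := by rw [dual_ground]; exact (hA heA).1
      have hCE : C ⊆ M✶.E \ {g} :=
        circuit_subset_ground hC hsm.1 (show e ∈ (del M✶ g).E from ⟨heE, by simp [heg]⟩)
      refine ⟨C, (del_circuit_iff hCE).1 hC, ?_, hsm⟩
      intro x hx
      have hxg : x ≠ g := fun h ↦ (hCE hx).2 (by simp [h])
      rcases hCss hx with h | h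
      · exact Or.inl (by simp only [mem_compl_iff, mem_insert_iff]; push_neg; exact ⟨hxg, h⟩)
      · exact Or.inr h

lemma intSet_loop_eq (hgE : g ∈ M.E) (hl : ¬ M.Indep {g})
    (hA : A ⊆ M.E \ {g}) : IntSet M A = IntSet (del M g) A := by
  have hgE' : g ∈ M✶.E := by rwa [dual_ground]
  have hco' : ¬ M✶✶.Indep {g} := by rwa [dual_dual]
  ext e
  simp only [IntSet, mem_setOf_eq, _root_.IsCocircuit]
  constructor
  · rintro ⟨heA, C, hC, hCss, hsm⟩
    refine ⟨heA, ?_⟩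
    have heg : e ≠ g := fun h ↦ (hA heA).2 (by simp [h])
    have heE : e ∈ M✶.E := by rw [dual_ground]; exact (hA heA).1
    have hgC : g ∉ C := coloop_not_mem_circuit hgE' hco' hC
    have hCE : C ⊆ M✶.E \ {g} :=
      subset_diff_singleton (circuit_subset_ground hC hsm.1 heE) hgC
    rw [del_dual]
    exact ⟨C, (coloop_con_circuit_iff hgE' hco' hCE).2 hC, hCss, hsm⟩
  · rintro ⟨heA, C, hC, hCss, hsm⟩
    refine ⟨heA, ?_⟩
    rw [del_dual] at hC
    have heg : e ≠ g := fun h ↦ (hA heA).2 (by simp [h])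
    have heE : e ∈ M✶.E := by rw [dual_ground]; exact (hA heA).1
    have hCE : C ⊆ M✶.E \ {g} :=
      circuit_subset_ground hC hsm.1 (show e ∈ (con M✶ g).E from ⟨heE, by simp [heg]⟩)
    exact ⟨C, (coloop_con_circuit_iff hgE' hco' hCE).1 hC, hCss, hsm⟩

lemma intSet_loop_insert (hgE : g ∈ M.E) (hl : ¬ M.Indep {g})
    (hA : A ⊆ M.E \ {g}) : IntSet M (insert g A) = IntSet (del M g) A := by
  have hgE' : g ∈ M✶.E := by rwa [dual_ground]
  have hco' : ¬ M✶✶.Indep {g} := by rwa [dual_dual]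
  ext e
  simp only [IntSet, mem_setOf_eq, _root_.IsCocircuit]
  constructor
  · rintro ⟨heA, C, hC, hCss, hsm⟩
    have hgC : g ∉ C := coloop_not_mem_circuit hgE' hco' hC
    rcases mem_insert_iff.1 heA with rfl | heA'
    · exact absurd hsm.1 hgC
    refine ⟨heA', ?_⟩
    have heg : e ≠ g := fun h ↦ (hA heA').2 (by simp [h])
    have heE : e ∈ M✶.E := by rw [dual_ground]; exact (hA heA').1
    have hCE : C ⊆ M✶.E \ {g} :=
      subset_diff_singleton (circuit_subset_ground hC hsm.1 heE) hgC
    rw [del_dual]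
    refine ⟨C, (coloop_con_circuit_iff hgE' hco' hCE).2 hC, ?_, hsm⟩
    intro x hx
    rcases hCss hx with h | h
    · exact Or.inl (fun hxA ↦ h (mem_insert_of_mem _ hxA))
    · exact Or.inr h
  · rintro ⟨heA, C, hC, hCss, hsm⟩
    refine ⟨mem_insert_of_mem _ heA, ?_⟩
    rw [del_dual] at hC
    have heg : e ≠ g := fun h ↦ (hA heA).2 (by simp [h])
    have heE : e ∈ M✶.E := by rw [dual_ground]; exact (hA heA).1
    have hCE : C ⊆ M✶.E \ {g} :=
      circuit_subset_ground hC hsm.1 (show e ∈ (con M✶ g).E from ⟨heE, by simp [heg]⟩)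
    refine ⟨C, (coloop_con_circuit_iff hgE' hco' hCE).1 hC, ?_, hsm⟩
    intro x hx
    have hxg : x ≠ g := fun h ↦ (hCE hx).2 (by simp [h])
    rcases hCss hx with h | h
    · exact Or.inl (by simp only [mem_compl_iff, mem_insert_iff]; push_neg; exact ⟨hxg, h⟩)
    · exact Or.inr h

end IntSetLemmas

end TutteAux
namespace TutteAux

open Set Matroid

variable {α : Type*} [Fintype α] [LinearOrder α]

section ExtSetLemmas

variable {M : Matroid α} {g : α} {A : Set α}

lemma extSet_del (hmax : ∀ x ∈ M.E, x ≤ g) (hl : M.Indep {g})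
    (hA : A ⊆ M.E \ {g}) :
    ExtSet M A ∩ M.E = ExtSet (del M g) A ∩ (M.E \ {g}) := by
  ext e
  simp only [ExtSet, mem_inter_iff, mem_setOf_eq, mem_diff]
  constructor
  · rintro ⟨⟨heA, C, hC, hCss, hsm⟩, heE⟩
    have heg : e ≠ g := by
      rintro rfl
      have hCE : C ⊆ M.E := circuit_subset_ground hC hsm.1 heE
      have hCeq := smallest_g_circuit hmax hC hCE hsm
      rw [hCeq] at hC
      exact hC.1 hl
    have hgC : g ∉ C := fun hgC ↦ by
      rcases hCss hgC with h | h
      · exact (hA h).2 rfl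
      · exact heg (mem_singleton_iff.1 h).symm
    have hCE' : C ⊆ M.E \ {g} :=
      subset_diff_singleton (circuit_subset_ground hC hsm.1 heE) hgC
    exact ⟨⟨heA, C, (del_circuit_iff hCE').2 hC, hCss, hsm⟩, heE, by simp [heg]⟩
  · rintro ⟨⟨heA, C, hC, hCss, hsm⟩, heE, heg⟩
    have hCE' : C ⊆ M.E \ {g} :=
      circuit_subset_ground hC hsm.1 (show e ∈ (del M g).E from ⟨heE, heg⟩)
    exact ⟨⟨heA, C, (del_circuit_iff hCE').1 hC, hCss, hsm⟩, heE⟩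

lemma extSet_loop (hgE : g ∈ M.E) (hl : ¬ M.Indep {g}) (hA : A ⊆ M.E \ {g}) :
    ExtSet M A ∩ M.E = insert g (ExtSet (del M g) A ∩ (M.E \ {g})) := by
  have hgA : g ∉ A := fun h ↦ (hA h).2 rfl
  ext e
  simp only [ExtSet, mem_inter_iff, mem_setOf_eq, mem_diff, mem_insert_iff]
  constructor
  · rintro ⟨⟨heA, C, hC, hCss, hsm⟩, heE⟩
    by_cases heg : e = g
    · exact Or.inl heg
    refine Or.inr ?_
    have hgC : g ∉ C := fun hgC ↦ by
      have := loop_mem_circuit hl hC hgC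
      exact heg (by simpa [this] using hsm.1)
    have hCE' : C ⊆ M.E \ {g} :=
      subset_diff_singleton (circuit_subset_ground hC hsm.1 heE) hgC
    exact ⟨⟨heA, C, (del_circuit_iff hCE').2 hC, hCss, hsm⟩, heE, heg⟩
  · rintro (rfl | ⟨⟨heA, C, hC, hCss, hsm⟩, heE, heg⟩)
    · refine ⟨⟨hgA, {e}, loop_is_circuit hl, fun x hx ↦ Or.inr hx, rfl, ?_⟩, hgE⟩
      intro f hf
      rw [mem_singleton_iff.1 hf]
    · have hCE' : C ⊆ M.E \ {g} :=
        circuit_subset_ground hC hsm.1 (show e ∈ (del M g).E from ⟨heE, heg⟩)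
      exact ⟨⟨heA, C, (del_circuit_iff hCE').1 hC, hCss, hsm⟩, heE⟩

lemma extSet_loop_insert (hgE : g ∈ M.E) (hl : ¬ M.Indep {g}) (hA : A ⊆ M.E \ {g}) :
    ExtSet M (insert g A) ∩ M.E = ExtSet (del M g) A ∩ (M.E \ {g}) := by
  ext e
  simp only [ExtSet, mem_inter_iff, mem_setOf_eq, mem_diff, mem_insert_iff]
  constructor
  · rintro ⟨⟨heA, C, hC, hCss, hsm⟩, heE⟩
    push_neg at heA
    have heg : e ≠ g := heA.1
    have hgC : g ∉ C := fun hgC ↦ by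
      have := loop_mem_circuit hl hC hgC
      exact heg (by simpa [this] using hsm.1)
    have hCss' : C ⊆ A ∪ {e} := by
      intro x hx
      rcases hCss hx with h | h
      · rcases mem_insert_iff.1 h with rfl | h'
        · exact absurd hx hgC
        · exact Or.inl h'
      · exact Or.inr h
    have hCE' : C ⊆ M.E \ {g} :=
      subset_diff_singleton (circuit_subset_ground hC hsm.1 heE) hgC
    exact ⟨⟨heA.2, C, (del_circuit_iff hCE').2 hC, hCss', hsm⟩, heE, heg⟩
  · rintro ⟨⟨heA, C, hC, hCss, hsm⟩, heE, heg⟩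
    have hCE' : C ⊆ M.E \ {g} :=
      circuit_subset_ground hC hsm.1 (show e ∈ (del M g).E from ⟨heE, heg⟩)
    refine ⟨⟨?_, C, (del_circuit_iff hCE').1 hC,
      hCss.trans (union_subset_union_left _ (subset_insert _ _)), hsm⟩, heE⟩
    push_neg
    exact ⟨heg, heA⟩

lemma extSet_con (hmax : ∀ x ∈ M.E, x ≤ g) (hgE : g ∈ M.E) (hl : M.Indep {g})
    (hA : A ⊆ M.E \ {g}) :
    ExtSet M (insert g A) ∩ M.E = ExtSet (con M g) A ∩ (M.E \ {g}) := by
  ext e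
  simp only [ExtSet, mem_inter_iff, mem_setOf_eq, mem_diff, mem_insert_iff]
  constructor
  · rintro ⟨⟨heA, C, hC, hCss, hsm⟩, heE⟩
    push_neg at heA
    have heg : e ≠ g := heA.1
    have hCE : C ⊆ M.E := circuit_subset_ground hC hsm.1 heE
    by_cases hgC : g ∈ C
    · have hne : C ≠ {g} := fun h ↦ heg (by simpa [h] using hsm.1)
      have hD := con_circuit_of_mem hgE hl hC hCE hgC hne
      have hDss : C \ {g} ⊆ A ∪ {e} := by
        rintro x ⟨hx, hxg⟩
        rcases hCss hx with h | h
        · rcases mem_insert_iff.1 h with rfl | h'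
          · exact absurd rfl hxg
          · exact Or.inl h'
        · exact Or.inr h
      refine ⟨⟨heA.2, C \ {g}, hD, hDss, ⟨hsm.1, by simp [heg]⟩,
        fun f hf ↦ hsm.2 f hf.1⟩, heE, heg⟩
    · have hCE' : C ⊆ M.E \ {g} := subset_diff_singleton hCE hgC
      have hCss' : C ⊆ A ∪ {e} := by
        intro x hx
        rcases hCss hx with h | h
        · rcases mem_insert_iff.1 h with rfl | h'
          · exact absurd hx hgC
          · exact Or.inl h'
        · exact Or.inr h
      obtain ⟨D, hD, heD, hDC⟩ := con_circuit_avoid hgE hl hC hCE' hsm.1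
      exact ⟨⟨heA.2, D, hD, hDC.trans hCss', heD, fun f hf ↦ hsm.2 f (hDC hf)⟩, heE, heg⟩
  · rintro ⟨⟨heA, D, hD, hDss, hsm⟩, heE, heg⟩
    have hDE : D ⊆ M.E \ {g} :=
      circuit_subset_ground hD hsm.1 (show e ∈ (con M g).E from ⟨heE, heg⟩)
    have heA' : e ∉ insert g A := by
      simp only [mem_insert_iff]
      push_neg
      exact ⟨heg, heA⟩
    rcases con_circuit_cases hgE hl hD hDE with h | h
    · exact ⟨⟨heA', D, h,
        hDss.trans (union_subset_union_left _ (subset_insert _ _)), hsm⟩, heE⟩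
    · refine ⟨⟨heA', insert g D, h, ?_, mem_insert_of_mem _ hsm.1, ?_⟩, heE⟩
      · rintro x (rfl | hx)
        · exact Or.inl (mem_insert _ _)
        · rcases hDss hx with h' | h'
          · exact Or.inl (mem_insert_of_mem _ h')
          · exact Or.inr h'
      · rintro f (rfl | hf)
        · exact hmax e heE
        · exact hsm.2 f hf

lemma extSet_coloop (hmax : ∀ x ∈ M.E, x ≤ g) (hgE : g ∈ M.E) (hco : ¬ M✶.Indep {g})
    (hA : A ⊆ M.E \ {g}) :
    ExtSet M A ∩ M.E = ExtSet (con M g) A ∩ (M.E \ {g}) := by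
  have hg : M.Indep {g} := by
    simpa using coloop_insert_indep hgE hco M.empty_indep
  ext e
  simp only [ExtSet, mem_inter_iff, mem_setOf_eq, mem_diff]
  constructor
  · rintro ⟨⟨heA, C, hC, hCss, hsm⟩, heE⟩
    have heg : e ≠ g := by
      rintro rfl
      have hCE : C ⊆ M.E := circuit_subset_ground hC hsm.1 heE
      have hCeq := smallest_g_circuit hmax hC hCE hsm
      rw [hCeq] at hC
      exact hC.1 hg
    have hgC : g ∉ C := coloop_not_mem_circuit hgE hco hC
    have hCE' : C ⊆ M.E \ {g} :=
      subset_diff_singleton (circuit_subset_ground hC hsm.1 heE) hgC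
    exact ⟨⟨heA, C, (coloop_con_circuit_iff hgE hco hCE').2 hC, hCss, hsm⟩, heE, heg⟩
  · rintro ⟨⟨heA, C, hC, hCss, hsm⟩, heE, heg⟩
    have hCE' : C ⊆ M.E \ {g} :=
      circuit_subset_ground hC hsm.1 (show e ∈ (con M g).E from ⟨heE, heg⟩)
    exact ⟨⟨heA, C, (coloop_con_circuit_iff hgE hco hCE').1 hC, hCss, hsm⟩, heE⟩

lemma extSet_coloop_insert (hgE : g ∈ M.E) (hco : ¬ M✶.Indep {g})
    (hA : A ⊆ M.E \ {g}) :
    ExtSet M (insert g A) ∩ M.E = ExtSet (con M g) A ∩ (M.E \ {g}) := by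
  ext e
  simp only [ExtSet, mem_inter_iff, mem_setOf_eq, mem_diff, mem_insert_iff]
  constructor
  · rintro ⟨⟨heA, C, hC, hCss, hsm⟩, heE⟩
    push_neg at heA
    have heg : e ≠ g := heA.1
    have hgC : g ∉ C := coloop_not_mem_circuit hgE hco hC
    have hCss' : C ⊆ A ∪ {e} := by
      intro x hx
      rcases hCss hx with h | h
      · rcases mem_insert_iff.1 h with rfl | h'
        · exact absurd hx hgC
        · exact Or.inl h'
      · exact Or.inr h
    have hCE' : C ⊆ M.E \ {g} :=
      subset_diff_singleton (circuit_subset_ground hC hsm.1 heE) hgC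
    exact ⟨⟨heA.2, C, (coloop_con_circuit_iff hgE hco hCE').2 hC, hCss', hsm⟩, heE, heg⟩
  · rintro ⟨⟨heA, C, hC, hCss, hsm⟩, heE, heg⟩
    have hCE' : C ⊆ M.E \ {g} :=
      circuit_subset_ground hC hsm.1 (show e ∈ (con M g).E from ⟨heE, heg⟩)
    refine ⟨⟨?_, C, (coloop_con_circuit_iff hgE hco hCE').1 hC,
      hCss.trans (union_subset_union_left _ (subset_insert _ _)), hsm⟩, heE⟩
    push_neg
    exact ⟨heg, heA⟩

end ExtSetLemmas

end TutteAux
namespace TutteAux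

open Set Matroid

variable {α : Type*} [Fintype α] [LinearOrder α]

lemma aux {R : Type*} [CommRing R] (x u y v : R) (s : Finset α) :
    ∀ (M : Matroid α), M.E = ↑s →
    (∑ A ∈ s.powerset,
      (x + u - 1) ^ (rk M univ - rk M (↑A : Set α)) * (y + v - 1) ^ (A.card - rk M ↑A))
    = ∑ A ∈ s.powerset, x ^ (IntSet M (↑A : Set α)).ncard * u ^ (rk M univ - rk M ↑A) *
        y ^ (ExtSet M ↑A ∩ (↑s : Set α)).ncard * v ^ (A.card - rk M ↑A) := by
  classical
  induction s using Finset.induction_on_max with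
  | empty =>
    intro M hE
    have h2 : rk M (∅ : Set α) = 0 := Nat.le_zero.mp (by simpa using rk_le_ncard M ∅)
    have h0 : rk M univ = 0 := by
      rw [rk_univ_eq_rk_ground, hE]
      simpa using h2
    have h1 : IntSet M ∅ = (∅ : Set α) := by ext e; simp [IntSet]
    simp [Finset.powerset_empty, h0, h1, h2]
  | insert g s' hlt ih =>
    intro M hE
    have hgs' : g ∉ s' := fun h ↦ lt_irrefl g (hlt g h)
    have hMg : M.E \ {g} = ↑s' := by
      rw [hE, Finset.coe_insert, Set.insert_diff_self_of_notMem (by simpa using hgs')]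
    have hgE : g ∈ M.E := by rw [hE]; simp
    have hmax : ∀ z ∈ M.E, z ≤ g := by
      rw [hE]
      intro z hz
      rw [Finset.coe_insert, Set.mem_insert_iff] at hz
      rcases hz with rfl | hz
      · exact le_refl _
      · exact (hlt z (by exact_mod_cast hz)).le
    have hAset : ∀ A ∈ s'.powerset, (↑A : Set α) ⊆ M.E \ {g} := by
      intro A hA
      rw [hMg]
      exact_mod_cast Finset.mem_powerset.1 hA
    have hgA : ∀ A ∈ s'.powerset, g ∉ A := by
      intro A hA h
      exact hgs' (Finset.mem_powerset.1 hA h)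
    have hcard : ∀ A ∈ s'.powerset, (insert g A).card = A.card + 1 := by
      intro A hA
      exact Finset.card_insert_of_notMem (hgA A hA)
    have hrkA_le : ∀ A : Finset α, rk M (↑A : Set α) ≤ A.card := by
      intro A
      simpa [Set.ncard_coe_finset] using rk_le_ncard M (↑A : Set α)
    have hsE : (↑(insert g s') : Set α) = M.E := hE.symm
    rw [Finset.sum_powerset_insert hgs', Finset.sum_powerset_insert hgs']
    by_cases hl : M.Indep {g}
    · by_cases hnc : M✶.Indep {g}
      · -- Case 3 : g is neither a loop nor a coloop
        have hdels : (del M g).E = ↑s' := by rw [del_ground, hMg]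
        have hcons : (con M g).E = ↑s' := by rw [con_ground, hMg]
        have ihdel := ih (del M g) hdels
        have ihcon := ih (con M g) hcons
        have eL1 : ∑ A ∈ s'.powerset,
            (x + u - 1) ^ (rk M univ - rk M (↑A : Set α)) * (y + v - 1) ^ (A.card - rk M ↑A)
            = ∑ A ∈ s'.powerset, (x + u - 1) ^ (rk (del M g) univ - rk (del M g) (↑A : Set α))
                * (y + v - 1) ^ (A.card - rk (del M g) ↑A) := by
          refine Finset.sum_congr rfl fun A hA ↦ ?_
          rw [rk_del_eq (hAset A hA), rk_univ_del hnc]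
        have eL2 : ∑ A ∈ s'.powerset,
            (x + u - 1) ^ (rk M univ - rk M (↑(insert g A) : Set α))
              * (y + v - 1) ^ ((insert g A).card - rk M ↑(insert g A))
            = ∑ A ∈ s'.powerset, (x + u - 1) ^ (rk (con M g) univ - rk (con M g) (↑A : Set α))
                * (y + v - 1) ^ (A.card - rk (con M g) ↑A) := by
          refine Finset.sum_congr rfl fun A hA ↦ ?_
          rw [Finset.coe_insert, hcard A hA, rk_con_insert hgE hl (hAset A hA),
            rk_univ_con hgE hl, Nat.succ_sub_succ, Nat.succ_sub_succ]
        have eR1 : ∑ A ∈ s'.powerset,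
            x ^ (IntSet M (↑A : Set α)).ncard * u ^ (rk M univ - rk M ↑A) *
              y ^ (ExtSet M ↑A ∩ (↑(insert g s') : Set α)).ncard * v ^ (A.card - rk M ↑A)
            = ∑ A ∈ s'.powerset,
              x ^ (IntSet (del M g) (↑A : Set α)).ncard
                * u ^ (rk (del M g) univ - rk (del M g) ↑A) *
                y ^ (ExtSet (del M g) ↑A ∩ (↑s' : Set α)).ncard
                * v ^ (A.card - rk (del M g) ↑A) := by
          refine Finset.sum_congr rfl fun A hA ↦ ?_
          rw [rk_del_eq (hAset A hA), rk_univ_del hnc,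
            intSet_del hmax hnc (hAset A hA), hsE,
            extSet_del hmax hl (hAset A hA), hMg]
        have eR2 : ∑ A ∈ s'.powerset,
            x ^ (IntSet M (↑(insert g A) : Set α)).ncard
              * u ^ (rk M univ - rk M ↑(insert g A)) *
              y ^ (ExtSet M ↑(insert g A) ∩ (↑(insert g s') : Set α)).ncard
              * v ^ ((insert g A).card - rk M ↑(insert g A))
            = ∑ A ∈ s'.powerset,
              x ^ (IntSet (con M g) (↑A : Set α)).ncard
                * u ^ (rk (con M g) univ - rk (con M g) ↑A) *
                y ^ (ExtSet (con M g) ↑A ∩ (↑s' : Set α)).ncard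
                * v ^ (A.card - rk (con M g) ↑A) := by
          refine Finset.sum_congr rfl fun A hA ↦ ?_
          rw [Finset.coe_insert, hcard A hA, rk_con_insert hgE hl (hAset A hA),
            rk_univ_con hgE hl, Nat.succ_sub_succ, Nat.succ_sub_succ,
            intSet_con hmax hgE hnc (hAset A hA), hsE,
            extSet_con hmax hgE hl (hAset A hA), hMg]
        rw [eL1, eL2, eR1, eR2, ihdel, ihcon]
      · -- Case 2 : g is a coloop
        have hcons : (con M g).E = ↑s' := by rw [con_ground, hMg]
        have ihcon := ih (con M g) hcons
        have hrka : ∀ A ∈ s'.powerset, rk M (↑A : Set α) = rk (con M g) ↑A := by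
          intro A hA
          have h1 := rk_con_insert hgE hl (hAset A hA)
          have h2 := rk_coloop_insert hgE hnc (A := (↑A : Set α))
            (fun h ↦ (hAset A hA h).2 rfl)
          omega
        have hrku := rk_univ_con hgE hl
        have hrkle : ∀ A : Finset α, rk (con M g) (↑A : Set α) ≤ rk (con M g) univ :=
          fun A ↦ rk_mono _ (subset_univ _)
        calc (∑ A ∈ s'.powerset,
              (x + u - 1) ^ (rk M univ - rk M (↑A : Set α))
                * (y + v - 1) ^ (A.card - rk M ↑A))
            + ∑ A ∈ s'.powerset,
              (x + u - 1) ^ (rk M univ - rk M (↑(insert g A) : Set α))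
                * (y + v - 1) ^ ((insert g A).card - rk M ↑(insert g A))
            = ∑ A ∈ s'.powerset, (x + u) *
              ((x + u - 1) ^ (rk (con M g) univ - rk (con M g) (↑A : Set α))
                * (y + v - 1) ^ (A.card - rk (con M g) ↑A)) := by
              rw [← Finset.sum_add_distrib]
              refine Finset.sum_congr rfl fun A hA ↦ ?_
              have hcr1 : rk M univ - rk M (↑A : Set α)
                  = (rk (con M g) univ - rk (con M g) ↑A) + 1 := by
                rw [hrka A hA, hrku]
                have := hrkle A
                omega
              have hcr2 : rk M univ - rk M (insert g (↑A : Set α))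
                  = rk (con M g) univ - rk (con M g) ↑A := by
                rw [rk_con_insert hgE hl (hAset A hA), hrku]
                omega
              have hnl1 : A.card - rk M (↑A : Set α) = A.card - rk (con M g) ↑A := by
                rw [hrka A hA]
              have hnl2 : A.card + 1 - rk M (insert g (↑A : Set α))
                  = A.card - rk (con M g) ↑A := by
                rw [rk_con_insert hgE hl (hAset A hA)]
                omega
              rw [Finset.coe_insert, hcard A hA, hcr1, hcr2, hnl1, hnl2, pow_succ]
              ring
          _ = (x + u) * ∑ A ∈ s'.powerset,
              x ^ (IntSet (con M g) (↑A : Set α)).ncard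
                * u ^ (rk (con M g) univ - rk (con M g) ↑A) *
                y ^ (ExtSet (con M g) ↑A ∩ (↑s' : Set α)).ncard
                * v ^ (A.card - rk (con M g) ↑A) := by
              rw [← Finset.mul_sum, ihcon]
          _ = _ := by
              rw [Finset.mul_sum, ← Finset.sum_add_distrib]
              refine (Finset.sum_congr rfl fun A hA ↦ ?_).symm
              have hins : IntSet M (↑(insert g A) : Set α)
                  = insert g (IntSet (con M g) ↑A) := by
                rw [Finset.coe_insert]
                exact intSet_coloop_insert hgE hnc (hAset A hA)
              have hgnotint : g ∉ IntSet (con M g) (↑A : Set α) :=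
                fun h ↦ (hAset A hA h.1).2 rfl
              have hinscard : (IntSet M (↑(insert g A) : Set α)).ncard
                  = (IntSet (con M g) (↑A : Set α)).ncard + 1 := by
                rw [hins, Set.ncard_insert_of_notMem hgnotint (Set.toFinite _)]
              have hextA : ExtSet M (↑A : Set α) ∩ (↑(insert g s') : Set α)
                  = ExtSet (con M g) ↑A ∩ (↑s' : Set α) := by
                rw [hsE, extSet_coloop hmax hgE hnc (hAset A hA), hMg]
              have hextI : ExtSet M (↑(insert g A) : Set α) ∩ (↑(insert g s') : Set α)
                  = ExtSet (con M g) ↑A ∩ (↑s' : Set α) := by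
                rw [Finset.coe_insert, hsE, extSet_coloop_insert hgE hnc (hAset A hA), hMg]
              have hcr1 : rk M univ - rk M (↑A : Set α)
                  = (rk (con M g) univ - rk (con M g) ↑A) + 1 := by
                rw [hrka A hA, hrku]
                have := hrkle A
                omega
              have hcr2 : rk M univ - rk M (↑(insert g A) : Set α)
                  = rk (con M g) univ - rk (con M g) ↑A := by
                rw [Finset.coe_insert, rk_con_insert hgE hl (hAset A hA), hrku]
                omega
              have hnl1 : A.card - rk M (↑A : Set α) = A.card - rk (con M g) ↑A := by
                rw [hrka A hA]
              have hnl2 : (insert g A).card - rk M (↑(insert g A) : Set α)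
                  = A.card - rk (con M g) ↑A := by
                rw [Finset.coe_insert, hcard A hA, rk_con_insert hgE hl (hAset A hA)]
                omega
              rw [hinscard, intSet_coloop_eq hgE hnc (hAset A hA), hextA, hextI,
                hcr1, hcr2, hnl1, hnl2, pow_succ, pow_succ]
              ring
    · -- Case 1 : g is a loop
      have hnc : M✶.Indep {g} := loop_not_coloop hgE hl
      have hdels : (del M g).E = ↑s' := by rw [del_ground, hMg]
      have ihdel := ih (del M g) hdels
      calc (∑ A ∈ s'.powerset,
            (x + u - 1) ^ (rk M univ - rk M (↑A : Set α))
              * (y + v - 1) ^ (A.card - rk M ↑A))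
          + ∑ A ∈ s'.powerset,
            (x + u - 1) ^ (rk M univ - rk M (↑(insert g A) : Set α))
              * (y + v - 1) ^ ((insert g A).card - rk M ↑(insert g A))
          = ∑ A ∈ s'.powerset, (y + v) *
            ((x + u - 1) ^ (rk (del M g) univ - rk (del M g) (↑A : Set α))
              * (y + v - 1) ^ (A.card - rk (del M g) ↑A)) := by
            rw [← Finset.sum_add_distrib]
            refine Finset.sum_congr rfl fun A hA ↦ ?_
            rw [Finset.coe_insert, hcard A hA, rk_loop_insert hl,
              rk_del_eq (hAset A hA), rk_univ_del hnc]
            have h1 : A.card + 1 - rk M (↑A : Set α) = (A.card - rk M ↑A) + 1 := by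
              have := hrkA_le A
              omega
            rw [h1, pow_succ]
            ring
        _ = (y + v) * ∑ A ∈ s'.powerset,
            x ^ (IntSet (del M g) (↑A : Set α)).ncard
              * u ^ (rk (del M g) univ - rk (del M g) ↑A) *
              y ^ (ExtSet (del M g) ↑A ∩ (↑s' : Set α)).ncard
              * v ^ (A.card - rk (del M g) ↑A) := by
            rw [← Finset.mul_sum, ihdel]
        _ = _ := by
            rw [Finset.mul_sum, ← Finset.sum_add_distrib]
            refine (Finset.sum_congr rfl fun A hA ↦ ?_).symm
            have hext1 : ExtSet M (↑A : Set α) ∩ (↑(insert g s') : Set α)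
                = insert g (ExtSet (del M g) ↑A ∩ (↑s' : Set α)) := by
              rw [hsE, extSet_loop hgE hl (hAset A hA), hMg]
            have hgnotext : g ∉ ExtSet (del M g) (↑A : Set α) ∩ (↑s' : Set α) :=
              fun h ↦ hgs' (by exact_mod_cast h.2)
            have hext1card : (ExtSet M (↑A : Set α) ∩ (↑(insert g s') : Set α)).ncard
                = (ExtSet (del M g) (↑A : Set α) ∩ (↑s' : Set α)).ncard + 1 := by
              rw [hext1, Set.ncard_insert_of_notMem hgnotext (Set.toFinite _)]
            have hext2 : ExtSet M (↑(insert g A) : Set α) ∩ (↑(insert g s') : Set α)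
                = ExtSet (del M g) ↑A ∩ (↑s' : Set α) := by
              rw [Finset.coe_insert, hsE, extSet_loop_insert hgE hl (hAset A hA), hMg]
            have hint1 : IntSet M (↑A : Set α) = IntSet (del M g) ↑A :=
              intSet_loop_eq hgE hl (hAset A hA)
            have hint2 : IntSet M (↑(insert g A) : Set α) = IntSet (del M g) ↑A := by
              rw [Finset.coe_insert]
              exact intSet_loop_insert hgE hl (hAset A hA)
            have h1 : (insert g A).card - rk M (↑(insert g A) : Set α)
                = (A.card - rk (del M g) ↑A) + 1 := by
              rw [Finset.coe_insert, hcard A hA, rk_loop_insert hl,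
                rk_del_eq (hAset A hA)]
              have h := hrkA_le A
              omega
            have h2 : rk M univ - rk M (↑(insert g A) : Set α)
                = rk (del M g) univ - rk (del M g) ↑A := by
              rw [Finset.coe_insert, rk_loop_insert hl, rk_del_eq (hAset A hA),
                rk_univ_del hnc]
            have h3 : rk M univ - rk M (↑A : Set α)
                = rk (del M g) univ - rk (del M g) ↑A := by
              rw [rk_del_eq (hAset A hA), rk_univ_del hnc]
            have h4 : A.card - rk M (↑A : Set α) = A.card - rk (del M g) ↑A := by
              rw [rk_del_eq (hAset A hA)]
            rw [hext1card, hext2, hint1, hint2, h1, h2, h3, h4, pow_succ, pow_succ]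
            ring

end TutteAux
open MvPolynomial in
theorem tutte_four_variable_expansion {α : Type*} [Fintype α] [LinearOrder α]
    (M : Matroid α) (hE : M.E = Set.univ) :
    tutteEval M (X 0 + X 1 : MvPolynomial (Fin 4) ℤ) (X 2 + X 3) =
      ∑ A ∈ (Finset.univ : Finset α).powerset,
        X 0 ^ (IntSet M (A : Set α)).ncard *
          X 1 ^ (rk M Set.univ - rk M (A : Set α)) *
          X 2 ^ (ExtSet M (A : Set α)).ncard *
          X 3 ^ (A.card - rk M (A : Set α)) := by
  have h := TutteAux.aux (X 0 : MvPolynomial (Fin 4) ℤ) (X 1) (X 2) (X 3)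
    (Finset.univ : Finset α) M (by rw [hE, Finset.coe_univ])
  simp only [tutteEval]
  rw [h]
  refine Finset.sum_congr rfl fun A hA ↦ ?_
  rw [Finset.coe_univ, Set.inter_univ]
end

section
/- Let M be a matroid on a finite linearly ordered set E and p ≥ 0. Then d^p/dx^p [t(M; x, x)] = p! Σ_A x^{ι_M(A)+ε_M(A)}, where the sum is over all A ⊆ E with cr_M(A) + nl_M(A) = p. -/
open Set

/-- The one-variable specialization `t(M; x, x)` of the Tutte polynomial. -/
noncomputable def tutteDiag {α : Type*} [Fintype α] (M : Matroid α) : Polynomial ℤ :=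
  ∑ A ∈ (Finset.univ : Finset α).powerset,
    (Polynomial.X - 1) ^ (rk M Set.univ - rk M (A : Set α)) *
      (Polynomial.X - 1) ^ (A.card - rk M (A : Set α))

set_option linter.unusedSectionVars false

namespace LasV

variable {α : Type*} [Fintype α] {M : Matroid α} {A B C D X Y I S T : Set α} {a e s t x q : α}

lemma subE (hE : M.E = univ) (X : Set α) : X ⊆ M.E := hE.symm ▸ subset_univ X

lemma rk_eq_ncard_basis (hE : M.E = univ) (hI : M.IsBasis I X) : rk M X = I.ncard := by
  apply le_antisymm
  · refine csSup_le ⟨0, ⟨∅, ⟨empty_subset _, M.empty_indep⟩, by simp⟩⟩ ?_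
    rintro n ⟨J, ⟨hJX, hJind⟩, rfl⟩
    obtain ⟨J', hJ', hJJ'⟩ := hJind.subset_isBasis_of_subset hJX (subE hE X)
    calc J.ncard ≤ J'.ncard := ncard_le_ncard hJJ' J'.toFinite
      _ = I.ncard := by rw [ncard_def, hJ'.encard_eq_encard hI, ← ncard_def]
  · refine le_csSup ⟨(univ : Set α).ncard, ?_⟩ ⟨I, ⟨hI.subset, hI.indep⟩, rfl⟩
    rintro n ⟨J, _, rfl⟩
    exact ncard_le_ncard (subset_univ J) finite_univ

lemma rk_univ_base (hE : M.E = univ) (hB : M.IsBase B) : rk M univ = B.ncard :=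
  rk_eq_ncard_basis hE (by simpa [hE] using hB.isBasis_ground)

lemma exists_circuit_of_dep (hD : ¬ M.Indep D) : ∃ C, C ⊆ D ∧ IsCircuit M C := by
  classical
  obtain ⟨F, hF, hmin⟩ := Finset.exists_min_image
    (Finset.univ.filter (fun F : Finset α => (F : Set α) ⊆ D ∧ ¬ M.Indep (F : Set α)))
    Finset.card ⟨D.toFinset, by simp [Set.coe_toFinset, hD]⟩
  rw [Finset.mem_filter] at hF
  refine ⟨F, hF.2.1, hF.2.2, ?_⟩
  intro x hx
  by_contra hdep
  have hErase : ((F.erase x : Finset α) : Set α) = (F : Set α) \ {x} := by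
    simp [Finset.coe_erase]
  have hmem : F.erase x ∈
      Finset.univ.filter (fun F : Finset α => (F : Set α) ⊆ D ∧ ¬ M.Indep (F : Set α)) := by
    rw [Finset.mem_filter, hErase]
    exact ⟨Finset.mem_univ _, (diff_subset.trans hF.2.1), hdep⟩
  have := hmin _ hmem
  have hlt : (F.erase x).card < F.card := Finset.card_erase_lt_of_mem (by exact_mod_cast hx)
  omega

lemma circuit_mem_closure_diff (hE : M.E = univ) (hC : IsCircuit M C) (hx : x ∈ C) :
    x ∈ M.closure (C \ {x}) := by
  have hI : M.Indep (C \ {x}) := hC.2 x hx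
  have hins : insert x (C \ {x}) = C := by
    rw [insert_diff_singleton, insert_eq_self.2 hx]
  rw [hI.mem_closure_iff_of_notMem (by simp), hins]
  exact ⟨hC.1, subE hE C⟩

lemma exists_circuit_of_mem_closure (hE : M.E = univ) (h : x ∈ M.closure X) (hx : x ∉ X) :
    ∃ C, IsCircuit M C ∧ x ∈ C ∧ C ⊆ insert x X := by
  obtain ⟨I, hI⟩ := M.exists_isBasis X (subE hE X)
  have hxI : x ∈ M.closure I := by rwa [hI.closure_eq_closure]
  have hxnI : x ∉ I := fun h' => hx (hI.subset h')
  rw [hI.indep.mem_closure_iff_of_notMem hxnI] at hxI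
  obtain ⟨C, hCsub, hC⟩ := exists_circuit_of_dep hxI.not_indep
  refine ⟨C, hC, ?_, hCsub.trans (insert_subset_insert hI.subset)⟩
  by_contra hxC
  exact hC.1 (hI.indep.subset (fun y hy => ((hCsub hy).resolve_left (fun h' => hxC (h' ▸ hy)))))

lemma circuit_cocircuit_orth (hE : M.E = univ) (hC : IsCircuit M C) (hD : IsCocircuit M D)
    (h : C ∩ D = {x}) : False := by
  have hxC : x ∈ C := (h.symm.subset rfl).1
  have hxD : x ∈ D := (h.symm.subset rfl).2
  -- D \ {x} is coindependent: some base avoids it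
  obtain ⟨B, hB, hdisj⟩ := (Matroid.dual_indep_iff_exists (subE hE _)).1 (hD.2 x hxD)
  -- every base meets D
  have hmeets : ∀ B', M.IsBase B' → ¬ Disjoint D B' := by
    intro B' hB' hd
    exact hD.1 ((Matroid.dual_indep_iff_exists (subE hE _)).2 ⟨B', hB', hd⟩)
  -- x ∈ cl(Dᶜ)
  have hxcl : x ∈ M.closure Dᶜ := by
    have := circuit_mem_closure_diff hE hC hxC
    refine M.closure_subset_closure ?_ this
    intro y hy
    intro hyD
    have : y ∈ C ∩ D := ⟨hy.1, hyD⟩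
    exact hy.2 (by rwa [h] at this)
  -- B ⊆ insert x Dᶜ
  have hBsub : B ⊆ insert x Dᶜ := by
    intro b hb
    by_cases hbD : b ∈ D
    · rcases eq_or_ne b x with rfl | hbx
      · exact mem_insert _ _
      · exact absurd hb (Set.disjoint_left.1 hdisj ⟨hbD, by simp [hbx]⟩)
    · exact mem_insert_of_mem _ hbD
  have hclD : M.E ⊆ M.closure Dᶜ := by
    have h1 : B ⊆ M.closure Dᶜ :=
      hBsub.trans (insert_subset hxcl (M.subset_closure Dᶜ (subE hE _)))
    calc M.E = M.closure B := hB.closure_eq.symm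
      _ ⊆ M.closure (M.closure Dᶜ) := M.closure_subset_closure h1
      _ = M.closure Dᶜ := M.closure_closure Dᶜ
  obtain ⟨I, hI⟩ := M.exists_isBasis Dᶜ (subE hE _)
  have hIbase : M.IsBase I :=
    hI.indep.isBase_of_ground_subset_closure (by rwa [hI.closure_eq_closure])
  exact hmeets I hIbase (disjoint_left.2 fun a haD haI => (hI.subset haI) haD)


lemma dual_hE (hE : M.E = univ) : M✶.E = univ := by rwa [Matroid.dual_ground]

/-- C3': an element in the dual closure of `X` is not in the closure of the complement. -/
lemma not_closure_of_dual_closure (hE : M.E = univ) (h : s ∈ M✶.closure X) (hsX : s ∉ X)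
    (h2 : s ∈ M.closure (Xᶜ \ {s})) : False := by
  obtain ⟨D, hD, hsD, hDsub⟩ := exists_circuit_of_mem_closure (dual_hE hE) h hsX
  obtain ⟨C, hC, hsC, hCsub⟩ := exists_circuit_of_mem_closure hE h2 (by simp)
  refine circuit_cocircuit_orth hE hC hD (x := s) ?_
  apply subset_antisymm
  · rintro y ⟨hyC, hyD⟩
    rcases eq_or_ne y s with rfl | hys
    · rfl
    · have h1 : y ∈ Xᶜ \ {s} := (hCsub hyC).resolve_left hys
      have h2 : y ∈ X := (hDsub hyD).resolve_left hys
      exact absurd h2 h1.1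
  · exact singleton_subset_iff.2 ⟨hsC, hsD⟩

lemma base_of_indep_coindep (hE : M.E = univ) (hB : M.Indep B) (hB' : M✶.Indep Bᶜ) :
    M.IsBase B := by
  obtain ⟨B0, hB0, hdisj⟩ := (Matroid.dual_indep_iff_exists (subE hE _)).1 hB'
  have hsub : B0 ⊆ B := by
    intro b hb
    by_contra hbB
    exact Set.disjoint_left.1 hdisj hbB hb
  rwa [← hB0.eq_of_subset_indep hB hsub]

section Order
variable [LinearOrder α]

/-- The active-element predicate. -/
def phi (M : Matroid α) (A : Set α) (a : α) : Prop := a ∈ M.closure (A ∩ Ioi a)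

lemma exists_circuit_iff_phi (hE : M.E = univ) (haA : a ∉ A) :
    (∃ C, IsCircuit M C ∧ C ⊆ insert a A ∧ SmallestIn a C) ↔ phi M A a := by
  constructor
  · rintro ⟨C, hC, hCsub, haC, hmin⟩
    have h1 : C \ {a} ⊆ A ∩ Ioi a := by
      rintro y ⟨hyC, hya⟩
      have hya' : y ≠ a := by simpa using hya
      refine ⟨(hCsub hyC).resolve_left hya', lt_of_le_of_ne (hmin y hyC) (Ne.symm hya')⟩
    exact M.closure_subset_closure h1 (circuit_mem_closure_diff hE hC haC)
  · intro h
    obtain ⟨C, hC, haC, hCsub⟩ := exists_circuit_of_mem_closure hE h (by simp)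
    refine ⟨C, hC, hCsub.trans (insert_subset_insert inter_subset_left), haC, ?_⟩
    intro f hf
    rcases hCsub hf with rfl | hfA
    · exact le_rfl
    · exact le_of_lt hfA.2

lemma inter_Ioi_diff (A : Set α) (a : α) : (A \ {a}) ∩ Ioi a = A ∩ Ioi a := by
  ext y
  simp only [mem_inter_iff, mem_diff, mem_singleton_iff, mem_Ioi]
  exact ⟨fun h => ⟨h.1.1, h.2⟩, fun h => ⟨⟨h.1, ne_of_gt h.2⟩, h.2⟩⟩

lemma phi_diff_singleton : phi M (A \ {a}) a ↔ phi M A a := by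
  unfold phi; rw [inter_Ioi_diff]

lemma Qset_eq (hE : M.E = univ) (A : Set α) : Qset M A = {a ∈ A | phi M A a} := by
  ext a
  simp only [Qset, mem_setOf_eq, mem_sep_iff]
  constructor
  · rintro ⟨haA, C, hC, hCsub, hmin⟩
    refine ⟨haA, phi_diff_singleton.1 ((exists_circuit_iff_phi (A := A \ {a}) hE (by simp)).1
      ⟨C, hC, ?_, hmin⟩)⟩
    intro y hy
    rcases eq_or_ne y a with rfl | hya
    · exact mem_insert _ _
    · exact mem_insert_of_mem _ ⟨hCsub hy, hya⟩
  · rintro ⟨haA, h⟩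
    obtain ⟨C, hC, hCsub, hmin⟩ := (exists_circuit_iff_phi hE (A := A \ {a}) (by simp)).2
      (phi_diff_singleton.2 h)
    refine ⟨haA, C, hC, ?_, hmin⟩
    intro y hy
    rcases hCsub hy with rfl | hyA
    · exact haA
    · exact hyA.1

lemma ExtSet_eq (hE : M.E = univ) (A : Set α) : ExtSet M A = {a | a ∉ A ∧ phi M A a} := by
  ext a
  simp only [ExtSet, mem_setOf_eq]
  refine and_congr_right fun haA => ?_
  rw [← exists_circuit_iff_phi hE haA]
  simp [union_singleton]

/-- The dual active-element predicate. -/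
def psi (M : Matroid α) (A : Set α) (a : α) : Prop := a ∈ M✶.closure (Aᶜ ∩ Ioi a)

lemma Pset_eq_dual (M : Matroid α) (A : Set α) : Pset M A = Qset M✶ Aᶜ := by
  ext a
  simp [Pset, Qset, IsCocircuit, mem_compl_iff]

lemma IntSet_eq_dual (M : Matroid α) (A : Set α) : IntSet M A = ExtSet M✶ Aᶜ := by
  ext a
  simp [IntSet, ExtSet, IsCocircuit, mem_compl_iff]

lemma Pset_eq (hE : M.E = univ) (A : Set α) : Pset M A = {a | a ∉ A ∧ psi M A a} := by
  rw [Pset_eq_dual, Qset_eq (dual_hE hE)]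
  ext a
  simp [psi, phi, mem_compl_iff]

lemma IntSet_eq (hE : M.E = univ) (A : Set α) : IntSet M A = {a | a ∈ A ∧ psi M A a} := by
  rw [IntSet_eq_dual, ExtSet_eq (dual_hE hE)]
  ext a
  simp [psi, phi, mem_compl_iff]

lemma Qset_subset (M : Matroid α) (A : Set α) : Qset M A ⊆ A := fun _ h => h.1
lemma Pset_disjoint (M : Matroid α) (A : Set α) : ∀ a ∈ Pset M A, a ∉ A := fun _ h => h.1
lemma IntSet_subset (M : Matroid α) (A : Set α) : IntSet M A ⊆ A := fun _ h => h.1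
lemma ExtSet_disjoint (M : Matroid α) (A : Set α) : ∀ a ∈ ExtSet M A, a ∉ A := fun _ h => h.1

/-- Lemma R : removing `Qset` doesn't change closures of upper parts. -/
lemma closure_inter_Ioi_diff_Qset (hE : M.E = univ) (A : Set α) :
    ∀ a, M.closure ((A \ Qset M A) ∩ Ioi a) = M.closure (A ∩ Ioi a) := by
  intro a
  induction a using WellFoundedGT.induction with
  | _ a IH =>
    refine subset_antisymm
      (M.closure_subset_closure (inter_subset_inter_left _ diff_subset)) ?_
    refine Matroid.closure_subset_closure_of_subset_closure ?_
    rintro x ⟨hxA, hxa⟩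
    by_cases hxQ : x ∈ Qset M A
    · have hphi : phi M A x := by
        rw [Qset_eq hE] at hxQ
        exact hxQ.2
      have := IH x hxa
      unfold phi at hphi
      rw [← this] at hphi
      exact M.closure_subset_closure
        (inter_subset_inter_right _ (Ioi_subset_Ioi (le_of_lt hxa))) hphi
    · exact M.subset_closure _ (subE hE _) ⟨⟨hxA, hxQ⟩, hxa⟩

lemma closure_diff_Qset (hE : M.E = univ) (A : Set α) :
    M.closure (A \ Qset M A) = M.closure A := by
  refine subset_antisymm (M.closure_subset_closure diff_subset) ?_
  refine Matroid.closure_subset_closure_of_subset_closure ?_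
  intro x hxA
  by_cases hxQ : x ∈ Qset M A
  · have hphi : phi M A x := by rw [Qset_eq hE] at hxQ; exact hxQ.2
    unfold phi at hphi
    rw [← closure_inter_Ioi_diff_Qset hE] at hphi
    exact M.closure_subset_closure (inter_subset_left) hphi
  · exact M.subset_closure _ (subE hE _) ⟨hxA, hxQ⟩

/-- Key1: removing dual-active elements of `B` preserves `phi` for elements outside `B`. -/
lemma phi_remove (hE : M.E = univ) (hSB : S ⊆ B) (hS : ∀ u ∈ S, psi M B u)
    (ht : t ∉ B) (h : t ∈ M.closure (B ∩ Ioi t)) : t ∈ M.closure ((B \ S) ∩ Ioi t) := by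
  refine Set.Finite.induction_on
    (motive := fun S _ => S ⊆ B → (∀ u ∈ S, psi M B u) → t ∈ M.closure ((B \ S) ∩ Ioi t))
    S S.toFinite (fun _ _ => by simpa using h) ?_ hSB hS
  rintro u S' huS' hS'fin IH hSB hS
  · have hS'B : S' ⊆ B := (subset_insert _ _).trans hSB
    have hIH : t ∈ M.closure ((B \ S') ∩ Ioi t) :=
      IH hS'B (fun v hv => hS v (mem_insert_of_mem _ hv))
    by_cases hut : u ∈ Ioi t
    · -- the sets differ by `u`
      have hsplit : (B \ S') ∩ Ioi t = insert u ((B \ insert u S') ∩ Ioi t) := by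
        ext y
        simp only [mem_inter_iff, mem_diff, mem_insert_iff, mem_Ioi]
        constructor
        · rintro ⟨⟨hyB, hyS'⟩, hyt⟩
          rcases eq_or_ne y u with rfl | hyu
          · exact Or.inl rfl
          · exact Or.inr ⟨⟨hyB, fun h => h.elim (fun h => hyu h) hyS'⟩, hyt⟩
        · rintro (rfl | ⟨⟨hyB, hyS⟩, hyt⟩)
          · exact ⟨⟨hSB (mem_insert _ _), huS'⟩, hut⟩
          · exact ⟨⟨hyB, fun h => hyS (Or.inr h)⟩, hyt⟩
      rw [hsplit] at hIH
      set Z := (B \ insert u S') ∩ Ioi t with hZ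
      by_cases htZ : t ∈ M.closure Z
      · exact htZ
      · exfalso
        have hexch : u ∈ M.closure (insert t Z) :=
          Matroid.closure_exchange ⟨hIH, htZ⟩ |>.1
        refine not_closure_of_dual_closure hE (X := Bᶜ ∩ Ioi u)
          (hS u (mem_insert _ _)) (by simp [hSB (mem_insert u S')]) ?_
        refine M.closure_subset_closure ?_ hexch
        intro y hy
        rcases hy with rfl | hyZ
        · constructor
          · simp only [mem_compl_iff, mem_inter_iff, mem_Ioi, not_and, not_lt]
            intro _
            exact le_of_lt hut
          · simp only [mem_singleton_iff]
            intro h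
            exact ht (h ▸ hSB (mem_insert u S'))
        · constructor
          · simp only [mem_compl_iff, mem_inter_iff, not_and]
            intro hc
            exact absurd hyZ.1.1 hc
          · simp only [mem_singleton_iff]
            intro h
            exact hyZ.1.2 (Or.inl h)
    · -- u ≤ t: sets coincide on Ioi t
      have : (B \ insert u S') ∩ Ioi t = (B \ S') ∩ Ioi t := by
        ext y
        simp only [mem_inter_iff, mem_diff, mem_insert_iff, mem_Ioi]
        constructor
        · rintro ⟨⟨h1, h2⟩, h3⟩; exact ⟨⟨h1, fun h => h2 (Or.inr h)⟩, h3⟩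
        · rintro ⟨⟨h1, h2⟩, h3⟩
          refine ⟨⟨h1, fun h => ?_⟩, h3⟩
          rcases h with rfl | h
          · exact hut h3
          · exact h2 h
      rwa [this]

lemma gA_indep (hE : M.E = univ) (A : Set α) : M.Indep (A \ Qset M A) := by
  by_contra h
  obtain ⟨C, hCsub, hC⟩ := exists_circuit_of_dep h
  have hCne : C.Nonempty := nonempty_iff_ne_empty.2 (fun h' => hC.1 (h' ▸ M.empty_indep))
  obtain ⟨x, hxC, hmin⟩ := Set.exists_min_image C id C.toFinite hCne
  refine (hCsub hxC).2 ?_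
  rw [Qset_eq hE]
  refine ⟨(hCsub hxC).1, ?_⟩
  refine M.closure_subset_closure ?_ (circuit_mem_closure_diff hE hC hxC)
  rintro y ⟨hyC, hyx⟩
  have hyx' : y ≠ x := by simpa using hyx
  exact ⟨(hCsub hyC).1, lt_of_le_of_ne (hmin y hyC) (Ne.symm hyx')⟩

lemma gA_basis (hE : M.E = univ) (A : Set α) : M.IsBasis (A \ Qset M A) A :=
  (gA_indep hE A).isBasis_of_subset_of_subset_closure diff_subset
    (by rw [closure_diff_Qset hE]; exact M.subset_closure A (subE hE A))

/-- The basis associated to a subset. -/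
def bfun (M : Matroid α) (A : Set α) : Set α := (A \ Qset M A) ∪ Pset M A

lemma bfun_indep (hE : M.E = univ) (A : Set α) : M.Indep (bfun M A) := by
  by_contra h
  obtain ⟨C, hCsub, hC⟩ := exists_circuit_of_dep h
  have hCP : (C ∩ Pset M A).Nonempty := by
    rw [nonempty_iff_ne_empty]
    intro h'
    refine hC.1 ((gA_indep hE A).subset (fun y hy => ?_))
    rcases hCsub hy with h1 | h2
    · exact h1
    · exact absurd (⟨hy, h2⟩ : y ∈ C ∩ Pset M A) (fun hmem => notMem_empty y (h' ▸ hmem))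
  obtain ⟨e, heCP, hmax⟩ := Set.exists_max_image (C ∩ Pset M A) id (C ∩ _).toFinite hCP
  have hpsi : psi M A e := by
    have := heCP.2
    rw [Pset_eq hE] at this
    exact this.2
  refine not_closure_of_dual_closure hE (X := Aᶜ ∩ Ioi e) hpsi (by simp) ?_
  refine M.closure_subset_closure ?_ (circuit_mem_closure_diff hE hC heCP.1)
  rintro y ⟨hyC, hye⟩
  have hye' : y ≠ e := by simpa using hye
  refine ⟨?_, by simpa using hye'⟩
  simp only [mem_compl_iff, mem_inter_iff, mem_Ioi, not_and, not_lt]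
  intro hyA
  have hyP : y ∈ Pset M A := by
    rcases hCsub hyC with h1 | h2
    · exact absurd h1.1 hyA
    · exact h2
  exact hmax y ⟨hyC, hyP⟩

lemma bfun_compl (M : Matroid α) (A : Set α) : (bfun M A)ᶜ = bfun M✶ Aᶜ := by
  have h1 : Qset M✶ Aᶜ = Pset M A := (Pset_eq_dual M A).symm
  have h2 : Pset M✶ Aᶜ = Qset M A := by
    rw [Pset_eq_dual M✶ Aᶜ, Matroid.dual_dual, compl_compl]
  unfold bfun
  rw [h1, h2]
  ext a
  have hQa : a ∈ Qset M A → a ∈ A := fun h => Qset_subset M A h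
  have hPa : a ∈ Pset M A → a ∉ A := Pset_disjoint M A a
  simp only [mem_compl_iff, mem_union, mem_diff, not_or, not_and, not_not]
  tauto

lemma bfun_base (hE : M.E = univ) (A : Set α) : M.IsBase (bfun M A) :=
  base_of_indep_coindep hE (bfun_indep hE A)
    (by rw [bfun_compl]; exact bfun_indep (dual_hE hE) Aᶜ)

section Interval
variable (hE : M.E = univ) (hB : M.IsBase B)
  (h1 : B \ A ⊆ IntSet M B) (h2 : A \ B ⊆ ExtSet M B)
include hE hB h1 h2

lemma Qset_interval : Qset M A = A \ B := by
  have hsub1 : A \ B ⊆ Qset M A := by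
    rintro t ⟨htA, htB⟩
    have h2' := h2 ⟨htA, htB⟩
    rw [ExtSet_eq hE] at h2'
    have hS : ∀ u ∈ B \ A, psi M B u := by
      intro u hu
      have := h1 hu
      rw [IntSet_eq hE] at this
      exact this.2
    have := phi_remove hE diff_subset hS htB h2'.2
    rw [Qset_eq hE]
    refine ⟨htA, M.closure_subset_closure ?_ this⟩
    refine inter_subset_inter_left _ ?_
    rw [diff_diff_right_self]
    exact inter_subset_right
  refine subset_antisymm ?_ hsub1
  intro q hq
  rw [Qset_eq hE] at hq
  obtain ⟨hqA, hphi⟩ := hq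
  refine ⟨hqA, fun hqB => ?_⟩
  have hsub : A \ Qset M A ⊆ B := by
    rintro a ⟨haA, haQ⟩
    by_contra haB
    exact haQ (hsub1 ⟨haA, haB⟩)
  have hX : q ∈ M.closure ((A \ Qset M A) ∩ Ioi q) := by
    rw [closure_inter_Ioi_diff_Qset hE]
    exact hphi
  have hXind : M.Indep ((A \ Qset M A) ∩ Ioi q) :=
    hB.indep.subset (inter_subset_left.trans hsub)
  rw [hXind.mem_closure_iff_of_notMem (by simp)] at hX
  exact hX.not_indep (hB.indep.subset
    (insert_subset hqB (inter_subset_left.trans hsub)))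

lemma Pset_interval : Pset M A = B \ A := by
  have hBc : M✶.IsBase Bᶜ := by
    have := hB.compl_isBase_dual
    rwa [hE, ← compl_eq_univ_diff] at this
  have h1' : Bᶜ \ Aᶜ ⊆ IntSet M✶ Bᶜ := by
    rw [compl_sdiff_compl, IntSet_eq_dual M✶ Bᶜ, Matroid.dual_dual, compl_compl]
    exact h2
  have h2' : Aᶜ \ Bᶜ ⊆ ExtSet M✶ Bᶜ := by
    rw [compl_sdiff_compl, ← IntSet_eq_dual M B]
    exact h1
  have := Qset_interval (dual_hE hE) hBc h1' h2'
  rw [← Pset_eq_dual, compl_sdiff_compl] at this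
  exact this

lemma ExtSet_interval : ExtSet M A = ExtSet M B \ (A \ B) := by
  have hQ := Qset_interval hE hB h1 h2
  have hsub : A \ Qset M A ⊆ B := by
    rw [hQ, diff_diff_right_self]
    exact inter_subset_right
  ext e
  simp only [mem_diff]
  constructor
  · intro he
    rw [ExtSet_eq hE] at he
    obtain ⟨heA, hphi⟩ := he
    have hX : e ∈ M.closure ((A \ Qset M A) ∩ Ioi e) := by
      rw [closure_inter_Ioi_diff_Qset hE]; exact hphi
    have heB : e ∉ B := by
      intro heB
      have hXind : M.Indep ((A \ Qset M A) ∩ Ioi e) :=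
        hB.indep.subset (inter_subset_left.trans hsub)
      rw [hXind.mem_closure_iff_of_notMem (by simp)] at hX
      exact hX.not_indep (hB.indep.subset
        (insert_subset heB (inter_subset_left.trans hsub)))
    refine ⟨?_, fun hc => heA hc.1⟩
    rw [ExtSet_eq hE]
    exact ⟨heB, M.closure_subset_closure (inter_subset_inter_left _ hsub) hX⟩
  · rintro ⟨heB', heAB⟩
    rw [ExtSet_eq hE] at heB'
    obtain ⟨heB, hphi⟩ := heB'
    have heA : e ∉ A := fun heA => heAB ⟨heA, heB⟩
    have hS : ∀ u ∈ B \ A, psi M B u := by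
      intro u hu
      have := h1 hu
      rw [IntSet_eq hE] at this
      exact this.2
    have := phi_remove hE diff_subset hS heB hphi
    rw [ExtSet_eq hE]
    refine ⟨heA, M.closure_subset_closure ?_ this⟩
    refine inter_subset_inter_left _ ?_
    rw [diff_diff_right_self]
    exact inter_subset_right

lemma IntSet_interval : IntSet M A = IntSet M B \ (B \ A) := by
  have hBc : M✶.IsBase Bᶜ := by
    have := hB.compl_isBase_dual
    rwa [hE, ← compl_eq_univ_diff] at this
  have h1' : Bᶜ \ Aᶜ ⊆ IntSet M✶ Bᶜ := by
    rw [compl_sdiff_compl, IntSet_eq_dual M✶ Bᶜ, Matroid.dual_dual, compl_compl]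
    exact h2
  have h2' : Aᶜ \ Bᶜ ⊆ ExtSet M✶ Bᶜ := by
    rw [compl_sdiff_compl, ← IntSet_eq_dual M B]
    exact h1
  have := ExtSet_interval (dual_hE hE) hBc h1' h2'
  rw [← IntSet_eq_dual, compl_sdiff_compl] at this
  rw [this, ← IntSet_eq_dual M B]

lemma basis_interval : M.IsBasis (A ∩ B) A := by
  have := gA_basis hE A
  rwa [Qset_interval hE hB h1 h2, diff_diff_right_self] at this

end Interval

lemma bfun_diff_right (A : Set α) : A \ bfun M A = Qset M A := by
  ext a
  have hQa : a ∈ Qset M A → a ∈ A := fun h => Qset_subset M A h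
  have hPa : a ∈ Pset M A → a ∉ A := Pset_disjoint M A a
  simp only [bfun, mem_diff, mem_union, not_or, not_and, not_not]
  tauto

lemma bfun_diff_left (A : Set α) : bfun M A \ A = Pset M A := by
  ext a
  have hQa : a ∈ Qset M A → a ∈ A := fun h => Qset_subset M A h
  have hPa : a ∈ Pset M A → a ∉ A := Pset_disjoint M A a
  simp only [bfun, mem_diff, mem_union, not_or, not_and, not_not]
  tauto

lemma interval_bfun_ext (hE : M.E = univ) (A : Set α) :
    A \ bfun M A ⊆ ExtSet M (bfun M A) := by
  rw [bfun_diff_right]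
  intro q hq
  have hq' := hq
  rw [Qset_eq hE] at hq'
  rw [ExtSet_eq hE]
  constructor
  · intro hmem
    rcases hmem with h | h
    · exact h.2 hq
    · exact Pset_disjoint M A q h hq'.1
  · have : q ∈ M.closure ((A \ Qset M A) ∩ Ioi q) := by
      rw [closure_inter_Ioi_diff_Qset hE]; exact hq'.2
    exact M.closure_subset_closure (inter_subset_inter_left _ subset_union_left) this

lemma interval_bfun_int (hE : M.E = univ) (A : Set α) :
    bfun M A \ A ⊆ IntSet M (bfun M A) := by
  have := interval_bfun_ext (dual_hE hE) Aᶜ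
  rw [← bfun_compl, compl_sdiff_compl, ← IntSet_eq_dual] at this
  exact this


lemma bfun_eq (hE : M.E = univ) (hB : M.IsBase B) (h1 : B \ A ⊆ IntSet M B)
    (h2 : A \ B ⊆ ExtSet M B) : bfun M A = B := by
  rw [bfun, Qset_interval hE hB h1 h2, Pset_interval hE hB h1 h2, diff_diff_right_self]
  ext a
  simp only [mem_union, mem_inter_iff, mem_diff]
  tauto

lemma interval_numbers (hE : M.E = univ) (hB : M.IsBase B) (h1 : B \ A ⊆ IntSet M B)
    (h2 : A \ B ⊆ ExtSet M B) :
    (rk M univ - rk M A) + (A.ncard - rk M A) = (B \ A).ncard + (A \ B).ncard ∧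
    (IntSet M A).ncard + (B \ A).ncard = (IntSet M B).ncard ∧
    (ExtSet M A).ncard + (A \ B).ncard = (ExtSet M B).ncard := by
  have hrkA : rk M A = (A ∩ B).ncard :=
    rk_eq_ncard_basis hE (basis_interval hE hB h1 h2)
  have hrkU : rk M univ = B.ncard := rk_univ_base hE hB
  have c1 : (A ∩ B).ncard + (B \ A).ncard = B.ncard := by
    rw [← ncard_union_eq (disjoint_left.2 fun a ha hb => hb.2 ha.1) (toFinite _) (toFinite _)]
    congr 1
    ext a
    simp only [mem_union, mem_inter_iff, mem_diff]
    tauto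
  have c2 : (A ∩ B).ncard + (A \ B).ncard = A.ncard := by
    rw [← ncard_union_eq (disjoint_left.2 fun a ha hb => hb.2 ha.2) (toFinite _) (toFinite _)]
    congr 1
    ext a
    simp only [mem_union, mem_inter_iff, mem_diff]
    tauto
  have hIA : (IntSet M A).ncard + (B \ A).ncard = (IntSet M B).ncard := by
    rw [IntSet_interval hE hB h1 h2, ncard_diff h1 (toFinite _)]
    have := ncard_le_ncard h1 (toFinite _)
    omega
  have hEA : (ExtSet M A).ncard + (A \ B).ncard = (ExtSet M B).ncard := by
    rw [ExtSet_interval hE hB h1 h2, ncard_diff h2 (toFinite _)]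
    have := ncard_le_ncard h2 (toFinite _)
    omega
  refine ⟨?_, hIA, hEA⟩
  have hle1 : rk M A ≤ rk M univ := by rw [hrkA, hrkU]; omega
  have hle2 : rk M A ≤ A.ncard := by rw [hrkA]; omega
  omega

lemma fiber_reindex (hE : M.E = univ) (B : Finset α) (hBase : M.IsBase (B : Set α))
    (G : ℕ → ℕ → Polynomial ℤ) :
    ∑ A ∈ Finset.univ.powerset.filter
        (fun A : Finset α => (Set.toFinite (bfun M (A : Set α))).toFinset = B),
      G ((rk M univ - rk M (A : Set α)) + (A.card - rk M (A : Set α)))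
        ((IntSet M (A : Set α)).ncard + (ExtSet M (A : Set α)).ncard)
    = ∑ U ∈ ((Set.toFinite (IntSet M (B : Set α))).toFinset ∪
        (Set.toFinite (ExtSet M (B : Set α))).toFinset).powerset,
      G U.card (((Set.toFinite (IntSet M (B : Set α))).toFinset ∪
        (Set.toFinite (ExtSet M (B : Set α))).toFinset).card - U.card) := by
  classical
  set IB := (Set.toFinite (IntSet M (B : Set α))).toFinset with hIBdef
  set EB := (Set.toFinite (ExtSet M (B : Set α))).toFinset with hEBdef
  have hIB : (IB : Set α) = IntSet M (B : Set α) := Set.Finite.coe_toFinset _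
  have hEB : (EB : Set α) = ExtSet M (B : Set α) := Set.Finite.coe_toFinset _
  have hmem : ∀ A : Finset α,
      A ∈ Finset.univ.powerset.filter
        (fun A : Finset α => (Set.toFinite (bfun M (A : Set α))).toFinset = B) ↔
      bfun M (A : Set α) = (B : Set α) := by
    intro A
    rw [Finset.mem_filter]
    constructor
    · rintro ⟨-, h⟩
      rw [← Set.Finite.coe_toFinset (Set.toFinite (bfun M (A : Set α))), h]
    · intro h
      refine ⟨Finset.mem_powerset.2 (Finset.subset_univ _), ?_⟩
      apply Finset.coe_injective
      rw [Set.Finite.coe_toFinset, h]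
  have hint : ∀ A : Finset α, bfun M (A : Set α) = (B : Set α) →
      ((B : Set α) \ (A : Set α) ⊆ IntSet M (B : Set α) ∧
       (A : Set α) \ (B : Set α) ⊆ ExtSet M (B : Set α)) := by
    intro A h
    constructor
    · have := interval_bfun_int hE (A : Set α)
      rwa [h] at this
    · have := interval_bfun_ext hE (A : Set α)
      rwa [h] at this
  refine Finset.sum_nbij' (i := fun A => (B \ A) ∪ (A \ B)) (j := fun U => (B \ U) ∪ (U \ B))
    ?_ ?_ ?_ ?_ ?_
  · -- maps to powerset
    intro A hA
    obtain ⟨h1, h2⟩ := hint A ((hmem A).1 hA)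
    rw [Finset.mem_powerset]
    intro a ha
    rcases Finset.mem_union.1 ha with h | h
    · rw [Finset.mem_sdiff] at h
      refine Finset.mem_union_left _ ?_
      rw [← Finset.mem_coe, hIB]
      exact h1 ⟨h.1, fun hc => h.2 (by exact_mod_cast hc)⟩
    · rw [Finset.mem_sdiff] at h
      refine Finset.mem_union_right _ ?_
      rw [← Finset.mem_coe, hEB]
      exact h2 ⟨h.1, fun hc => h.2 (by exact_mod_cast hc)⟩
  · -- reverse maps to the fiber
    intro U hU
    rw [Finset.mem_powerset] at hU
    rw [hmem]
    have hcoe : (((B \ U) ∪ (U \ B) : Finset α) : Set α) =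
        ((B : Set α) \ (U : Set α)) ∪ ((U : Set α) \ (B : Set α)) := by
      push_cast
      rfl
    rw [hcoe]
    apply bfun_eq hE hBase
    · rintro b ⟨hbB, hbA⟩
      simp only [mem_union, mem_diff, Finset.mem_coe] at hbA hbB
      have hbU : b ∈ U := by
        by_contra hbU
        exact hbA (Or.inl ⟨by exact_mod_cast hbB, by exact_mod_cast hbU⟩)
      rcases Finset.mem_union.1 (hU hbU) with h | h
      · rw [← Finset.mem_coe, hIB] at h
        exact h
      · rw [← Finset.mem_coe, hEB] at h
        exact absurd hbB (ExtSet_disjoint M _ b h)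
    · rintro u ⟨huA, huB⟩
      simp only [mem_union, mem_diff, Finset.mem_coe] at huA
      have huU : u ∈ (U : Set α) := by
        rcases huA with h | h
        · exact absurd h.1 huB
        · exact h.1
      rcases Finset.mem_union.1 (hU (by exact_mod_cast huU)) with h | h
      · rw [← Finset.mem_coe, hIB] at h
        exact absurd (IntSet_subset M _ h) huB
      · rw [← Finset.mem_coe, hEB] at h
        exact h
  · -- left inverse
    intro A _
    ext a
    simp only [Finset.mem_union, Finset.mem_sdiff]
    tauto
  · -- right inverse
    intro U _
    ext a
    simp only [Finset.mem_union, Finset.mem_sdiff]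
    tauto
  · -- values agree
    intro A hA
    obtain ⟨h1, h2⟩ := hint A ((hmem A).1 hA)
    obtain ⟨n3, n4, n5⟩ := interval_numbers hE hBase h1 h2
    have hdisj : Disjoint (B \ A) (A \ B) :=
      Finset.disjoint_left.2 fun a ha hb => (Finset.mem_sdiff.1 hb).2 (Finset.mem_sdiff.1 ha).1
    have hcardU : ((B \ A) ∪ (A \ B)).card = (B \ A).card + (A \ B).card :=
      Finset.card_union_of_disjoint hdisj
    have hdisj2 : Disjoint IB EB := by
      rw [Finset.disjoint_left]
      intro a ha hb
      rw [← Finset.mem_coe, hIB] at ha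
      rw [← Finset.mem_coe, hEB] at hb
      exact ExtSet_disjoint M _ a hb (IntSet_subset M _ ha)
    have hcardIE : (IB ∪ EB).card = IB.card + EB.card :=
      Finset.card_union_of_disjoint hdisj2
    have e1 : ((B : Set α) \ (A : Set α)).ncard = (B \ A).card := by
      rw [← Finset.coe_sdiff, ncard_coe_finset]
    have e2 : ((A : Set α) \ (B : Set α)).ncard = (A \ B).card := by
      rw [← Finset.coe_sdiff, ncard_coe_finset]
    have e3 : (IntSet M (B : Set α)).ncard = IB.card := by
      rw [← hIB, ncard_coe_finset]
    have e4 : (ExtSet M (B : Set α)).ncard = EB.card := by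
      rw [← hEB, ncard_coe_finset]
    have e5 : (A : Set α).ncard = A.card := ncard_coe_finset A
    congr 1
    · rw [hcardU, ← e5, ← e1, ← e2]
      exact n3
    · rw [hcardU, hcardIE]
      omega

lemma sum_pow_card {β : Type*} [DecidableEq β] (s : Finset β) (y : Polynomial ℤ) :
    ∑ U ∈ s.powerset, y ^ U.card = (y + 1) ^ s.card := by
  induction s using Finset.induction_on with
  | empty => simp
  | @insert a s ha ih =>
    rw [Finset.sum_powerset_insert ha, ih, Finset.card_insert_of_notMem ha]
    have h1 : ∑ t ∈ s.powerset, y ^ (insert a t).card = ∑ t ∈ s.powerset, y * y ^ t.card := by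
      refine Finset.sum_congr rfl fun t ht => ?_
      rw [Finset.card_insert_of_notMem (fun h => ha (Finset.mem_powerset.1 ht h))]
      ring
    rw [h1, ← Finset.mul_sum, ih]
    ring

lemma iter_der_sum {ι : Type*} (s : Finset ι) (f : ι → Polynomial ℤ) (p : ℕ) :
    (⇑(Polynomial.derivative (R := ℤ)))^[p] (∑ i ∈ s, f i) =
      ∑ i ∈ s, (⇑(Polynomial.derivative (R := ℤ)))^[p] (f i) := by
  induction p with
  | zero => simp
  | succ p ih =>
    rw [Function.iterate_succ_apply', ih, map_sum]
    exact Finset.sum_congr rfl fun i _ => (Function.iterate_succ_apply' _ _ _).symm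

theorem main {α : Type*} [Fintype α] [LinearOrder α]
    (M : Matroid α) (hE : M.E = Set.univ) (p : ℕ) :
    (⇑(Polynomial.derivative (R := ℤ)))^[p] (tutteDiag M) =
      (p.factorial : ℤ) •
        ∑ A ∈ Finset.univ.powerset.filter
            (fun A : Finset α =>
              (rk M Set.univ - rk M (A : Set α)) + (A.card - rk M (A : Set α)) = p),
          Polynomial.X ^ ((IntSet M (A : Set α)).ncard + (ExtSet M (A : Set α)).ncard) := by
  classical
  have hFmaps : ∀ A : Finset α, A ∈ (Finset.univ.powerset : Finset (Finset α)) →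
      (Set.toFinite (bfun M (A : Set α))).toFinset ∈ (Finset.univ.powerset : Finset (Finset α)) :=
    fun A _ => Finset.mem_powerset.2 (Finset.subset_univ _)
  unfold tutteDiag
  simp_rw [← pow_add]
  rw [← Finset.sum_fiberwise_of_maps_to hFmaps
    (fun A : Finset α => ((Polynomial.X : Polynomial ℤ) - 1) ^
      ((rk M Set.univ - rk M (A : Set α)) + (A.card - rk M (A : Set α))))]
  rw [Finset.sum_filter]
  rw [← Finset.sum_fiberwise_of_maps_to hFmaps
    (fun A : Finset α => if (rk M Set.univ - rk M (A : Set α)) + (A.card - rk M (A : Set α)) = p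
      then (Polynomial.X : Polynomial ℤ) ^
        ((IntSet M (A : Set α)).ncard + (ExtSet M (A : Set α)).ncard) else 0)]
  rw [iter_der_sum, Finset.smul_sum]
  refine Finset.sum_congr rfl ?_
  intro B _
  by_cases hBase : M.IsBase (B : Set α)
  · have L := fiber_reindex hE B hBase
      (fun c i => ((Polynomial.X : Polynomial ℤ) - 1) ^ c)
    have R := fiber_reindex hE B hBase
      (fun c i => if c = p then (Polynomial.X : Polynomial ℤ) ^ i else 0)
    rw [L, R]
    set s := ((Set.toFinite (IntSet M (B : Set α))).toFinset ∪
        (Set.toFinite (ExtSet M (B : Set α))).toFinset) with hs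
    rw [sum_pow_card, sub_add_cancel, Polynomial.iterate_derivative_X_pow_eq_natCast_mul]
    rw [← Finset.sum_filter, ← Finset.powersetCard_eq_filter]
    have hconst : ∑ U ∈ Finset.powersetCard p s,
        (Polynomial.X : Polynomial ℤ) ^ (s.card - U.card) =
        ∑ U ∈ Finset.powersetCard p s, (Polynomial.X : Polynomial ℤ) ^ (s.card - p) := by
      refine Finset.sum_congr rfl fun U hU => ?_
      rw [(Finset.mem_powersetCard.1 hU).2]
    rw [hconst, Finset.sum_const, Finset.card_powersetCard]
    rw [nsmul_eq_mul, zsmul_eq_mul]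
    push_cast
    rw [Nat.descFactorial_eq_factorial_mul_choose]
    push_cast
    ring
  · have hempty : Finset.univ.powerset.filter
        (fun A : Finset α => (Set.toFinite (bfun M (A : Set α))).toFinset = B) = ∅ := by
      refine Finset.filter_eq_empty_iff.2 ?_
      intro A _ h
      apply hBase
      have hcoe : bfun M (A : Set α) = (B : Set α) := by
        rw [← Set.Finite.coe_toFinset (Set.toFinite (bfun M (A : Set α))), h]
      rw [← hcoe]
      exact bfun_base hE (A : Set α)
    rw [hempty, Finset.sum_empty, Finset.sum_empty, smul_zero]
    exact Function.iterate_fixed (map_zero _) p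


end Order
end LasV

theorem tutteDiag_derivative {α : Type*} [Fintype α] [LinearOrder α]
    (M : Matroid α) (hE : M.E = Set.univ) (p : ℕ) :
    (⇑(Polynomial.derivative (R := ℤ)))^[p] (tutteDiag M) =
      (p.factorial : ℤ) •
        ∑ A ∈ Finset.univ.powerset.filter
            (fun A : Finset α =>
              (rk M Set.univ - rk M (A : Set α)) + (A.card - rk M (A : Set α)) = p),
          Polynomial.X ^ ((IntSet M (A : Set α)).ncard + (ExtSet M (A : Set α)).ncard) := by
  exact LasV.main M hE p
end
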